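/- arXiv:2501.04885 — 12 statements merged into one kernel-verified Lean document; each statement's English description precedes it below -/
import Mathlib

section
/- Let n ≥ 4 and let φ: ℝ^{n−3} → ℝ^{n−3} be the affine involution φ(d_1, d_2, d_3, d_4, …) = (d_1, 1−d_2, d_3, 1−d_4, …), which fixes odd-indexed coordinates and replaces each even-indexed coordinate d_j by 1−d_j. Then φ maps P_n(1) bijectively onto O_{n−3}, and φ preserves Lebesgue measure on ℝ^{n−3} (for every measurable S ⊆ ℝ^{n−3}, the Lebesgue measure of φ(S) equals that of S). -/
open scoped Classical

open MeasureTheory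

/-- `P_n(1) ⊆ ℝ^{n-3}` (0-indexed coordinates `d_0,…,d_{n-4}`): points of `[0,1]^{n-3}`
with `d_j + d_{j+1} ≥ 1` for consecutive coordinates. -/
def Pn1 (n : ℕ) : Set (Fin (n - 3) → ℝ) :=
  {d | (∀ j, d j ∈ Set.Icc (0 : ℝ) 1) ∧
    ∀ j : ℕ, ∀ h : j + 1 < n - 3, 1 ≤ d ⟨j, Nat.lt_of_succ_lt h⟩ + d ⟨j + 1, h⟩}

/-- The zig-zag order polytope `O_m ⊆ [0,1]^m` (0-indexed): `x_j ≥ x_{j+1}` for `j` even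
(1-indexed odd) and `x_j ≤ x_{j+1}` for `j` odd (1-indexed even). -/
def Ozz (m : ℕ) : Set (Fin m → ℝ) :=
  {x | (∀ j, x j ∈ Set.Icc (0 : ℝ) 1) ∧
    ∀ j : ℕ, ∀ h : j + 1 < m,
      if Even j then x ⟨j + 1, h⟩ ≤ x ⟨j, Nat.lt_of_succ_lt h⟩
      else x ⟨j, Nat.lt_of_succ_lt h⟩ ≤ x ⟨j + 1, h⟩}

/-- The affine involution `φ` fixing 1-indexed odd coordinates (0-indexed even) and sending
even-indexed coordinates `d_j` to `1 - d_j`. -/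
def phiMap (m : ℕ) (d : Fin m → ℝ) : Fin m → ℝ :=
  fun j => if Even (j : ℕ) then d j else 1 - d j

lemma phiMap_invol (m : ℕ) (d : Fin m → ℝ) : phiMap m (phiMap m d) = d := by
  funext j
  by_cases hj : Even (j : ℕ) <;> simp [phiMap, hj]

lemma phiMap_mem_iff (m : ℕ) (d : Fin m → ℝ) :
    ((∀ j, d j ∈ Set.Icc (0 : ℝ) 1) ∧
      ∀ j : ℕ, ∀ h : j + 1 < m, 1 ≤ d ⟨j, Nat.lt_of_succ_lt h⟩ + d ⟨j + 1, h⟩) ↔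
    phiMap m d ∈ Ozz m := by
  constructor
  · rintro ⟨hbox, hineq⟩
    constructor
    · intro j
      by_cases hj : Even (j : ℕ)
      · simpa [phiMap, hj] using hbox j
      · obtain ⟨h0, h1⟩ := hbox j
        simp only [phiMap, hj, if_false, Set.mem_Icc]
        constructor <;> linarith
    · intro j h
      have key := hineq j h
      by_cases hj : Even j
      · have hj1 : ¬ Even (j + 1) := by simp [Nat.even_add_one, hj]
        simp only [hj, if_true, phiMap, hj1, if_false]
        linarith
      · have hj1 : Even (j + 1) := Nat.even_add_one.mpr hj
        simp only [hj, if_false, phiMap, hj1, if_true]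
        linarith
  · rintro ⟨hbox, hineq⟩
    constructor
    · intro j
      by_cases hj : Even (j : ℕ)
      · simpa [phiMap, hj] using hbox j
      · have := hbox j
        simp only [phiMap, hj, if_false, Set.mem_Icc] at this
        obtain ⟨h0, h1⟩ := this
        constructor <;> linarith
    · intro j h
      have key := hineq j h
      by_cases hj : Even j
      · have hj1 : ¬ Even (j + 1) := by simp [Nat.even_add_one, hj]
        simp only [hj, if_true, phiMap, hj1, if_false] at key
        linarith
      · have hj1 : Even (j + 1) := Nat.even_add_one.mpr hj
        simp only [hj, if_false, phiMap, hj1, if_true] at key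
        linarith

lemma phiMap_measurePreserving (m : ℕ) :
    MeasurePreserving (phiMap m) (volume : Measure (Fin m → ℝ)) volume := by
  have h : ∀ i : Fin m, MeasurePreserving
      (fun x : ℝ => if Even (i : ℕ) then x else 1 - x) volume volume := by
    intro i
    by_cases hi : Even (i : ℕ)
    · simp only [hi, if_true]
      exact MeasurePreserving.id (volume : Measure ℝ)
    · simpa [hi] using Measure.measurePreserving_sub_left (volume : Measure ℝ) 1
  have := measurePreserving_pi (fun _ : Fin m => (volume : Measure ℝ))
    (fun _ : Fin m => (volume : Measure ℝ)) h
  rw [← volume_pi] at this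
  exact this

/-- for `n ≥ 4`, `φ` maps `P_n(1)` bijectively onto `O_{n-3}` and preserves
Lebesgue measure on `ℝ^{n-3}`. -/
theorem phi_bijOn_and_measure_preserving (n : ℕ) (hn : 4 ≤ n) :
    Set.BijOn (phiMap (n - 3)) (Pn1 n) (Ozz (n - 3)) ∧
    ∀ S : Set (Fin (n - 3) → ℝ), MeasurableSet S →
      volume (phiMap (n - 3) '' S) = volume S := by
  set m := n - 3 with hm
  have hinvol := phiMap_invol m
  constructor
  · refine ⟨?_, ?_, ?_⟩
    · intro d hd
      exact (phiMap_mem_iff m d).mp hd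
    · intro a _ b _ hab
      have := congrArg (phiMap m) hab
      rwa [hinvol, hinvol] at this
    · intro x hx
      refine ⟨phiMap m x, ?_, hinvol x⟩
      have : phiMap m (phiMap m x) ∈ Ozz m := by rw [hinvol]; exact hx
      exact (phiMap_mem_iff m (phiMap m x)).mpr this
  · intro S hS
    have himg : phiMap m '' S = phiMap m ⁻¹' S := by
      ext x
      constructor
      · rintro ⟨y, hy, rfl⟩
        simpa [Set.mem_preimage, hinvol y] using hy
      · intro hx
        exact ⟨phiMap m x, hx, hinvol x⟩
    rw [himg]
    exact (phiMap_measurePreserving m).measure_preimage hS.nullMeasurableSet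
end

section
/- Let m ≥ 1. (i) For every permutation τ of {1,…,m}, the orthoscheme Δ_τ has Lebesgue volume 1/m!. (ii) For distinct permutations τ ≠ τ′ of {1,…,m}, the intersection Δ_τ ∩ Δ_{τ′} has Lebesgue measure zero. (iii) If τ is down-up alternating then Δ_τ ⊆ O_m, and moreover O_m equals the union of the Δ_τ over all down-up alternating permutations τ of {1,…,m}. -/
open scoped Classical ENNReal

/-- A permutation of `{1,…,m}` (0-indexed on `Fin m`) is down-up alternating if
`τ(1) > τ(2) < τ(3) > ⋯`. -/
def DownUp {m : ℕ} (τ : Equiv.Perm (Fin m)) : Prop :=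
  ∀ i : ℕ, ∀ h : i + 1 < m,
    if Even i then τ ⟨i + 1, h⟩ < τ ⟨i, Nat.lt_of_succ_lt h⟩
    else τ ⟨i, Nat.lt_of_succ_lt h⟩ < τ ⟨i + 1, h⟩

/-- Up-down alternating: `τ(1) < τ(2) > τ(3) < ⋯`. -/
def UpDown {m : ℕ} (τ : Equiv.Perm (Fin m)) : Prop :=
  ∀ i : ℕ, ∀ h : i + 1 < m,
    if Even i then τ ⟨i, Nat.lt_of_succ_lt h⟩ < τ ⟨i + 1, h⟩
    else τ ⟨i + 1, h⟩ < τ ⟨i, Nat.lt_of_succ_lt h⟩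

/-- The Euler number `E_m`: the number of down-up alternating permutations of `{1,…,m}`. -/
noncomputable def eulerNumber (m : ℕ) : ℕ :=
  Nat.card {τ : Equiv.Perm (Fin m) // DownUp τ}

open MeasureTheory

/-- The orthoscheme `Δ_τ = {x ∈ [0,1]^m : x_{τ⁻¹(1)} ≤ ⋯ ≤ x_{τ⁻¹(m)}}`, expressed as:
`x_a ≤ x_b` whenever `τ a ≤ τ b`. -/
def orthoscheme {m : ℕ} (τ : Equiv.Perm (Fin m)) : Set (Fin m → ℝ) :=
  {x | (∀ j, x j ∈ Set.Icc (0 : ℝ) 1) ∧ ∀ a b : Fin m, τ a ≤ τ b → x a ≤ x b}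

lemma exists_perm_sort {m : ℕ} (x : Fin m → ℝ) (tb : Fin m → ℕ)
    (htb : Function.Injective tb) :
    ∃ τ : Equiv.Perm (Fin m),
      (∀ a b : Fin m, τ a ≤ τ b → x a ≤ x b) ∧
      (∀ a b : Fin m, τ a < τ b ↔ (x a < x b ∨ (x a = x b ∧ tb a < tb b))) := by
  set key : Fin m → ℝ ×ₗ ℕ := fun a => toLex (x a, tb a) with hkey
  have hinj : Function.Injective key := by
    intro a b hab
    apply htb
    have := congrArg (fun p => (ofLex p).2) hab
    simpa [hkey] using this
  set σ := Tuple.sort key with hσ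
  have hmono : Monotone (key ∘ σ) := Tuple.monotone_sort key
  have hsinj : Function.Injective (key ∘ σ) := hinj.comp σ.injective
  have hstrict : StrictMono (key ∘ σ) := hmono.strictMono_of_injective hsinj
  refine ⟨σ⁻¹, ?_, ?_⟩
  · intro a b hab
    have h1 : key a ≤ key b := by
      have := hmono hab
      simpa [Function.comp] using this
    rcases Prod.Lex.le_iff.1 h1 with h | h
    · exact le_of_lt h
    · exact le_of_eq h.1
  · intro a b
    have hiff : σ⁻¹ a < σ⁻¹ b ↔ key a < key b := by
      rw [← hstrict.lt_iff_lt]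
      simp [Function.comp]
    rw [hiff, show key a = toLex (x a, tb a) from rfl, show key b = toLex (x b, tb b) from rfl,
      Prod.Lex.lt_iff]
    exact Iff.rfl

lemma orthoscheme_measurable {m : ℕ} (τ : Equiv.Perm (Fin m)) :
    MeasurableSet (orthoscheme τ) := by
  have : orthoscheme τ = (⋂ j, (fun x : Fin m → ℝ => x j) ⁻¹' Set.Icc (0:ℝ) 1) ∩
      ⋂ (a : Fin m) (b : Fin m) (_ : τ a ≤ τ b), {x : Fin m → ℝ | x a ≤ x b} := by
    ext x; simp [orthoscheme, Set.mem_iInter]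
  rw [this]
  apply MeasurableSet.inter
  · exact MeasurableSet.iInter fun j => (measurable_pi_apply j) measurableSet_Icc
  · refine MeasurableSet.iInter fun a => MeasurableSet.iInter fun b =>
      MeasurableSet.iInter fun _ => ?_
    exact measurableSet_le (measurable_pi_apply a) (measurable_pi_apply b)

lemma eq_coord_null {m : ℕ} (a b : Fin m) (hab : a ≠ b) :
    volume {x : Fin m → ℝ | x a = x b} = 0 := by
  set φ : (Fin m → ℝ) →ₗ[ℝ] ℝ :=
    (LinearMap.proj a : (Fin m → ℝ) →ₗ[ℝ] ℝ) - (LinearMap.proj b : (Fin m → ℝ) →ₗ[ℝ] ℝ) with hφ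
  have hker : {x : Fin m → ℝ | x a = x b} = (LinearMap.ker φ : Set (Fin m → ℝ)) := by
    ext x
    simp [hφ, LinearMap.mem_ker, sub_eq_zero]
  rw [hker]
  apply Measure.addHaar_submodule
  intro htop
  have h1 : φ (Pi.single a 1) = 0 := by
    have : (Pi.single a (1:ℝ)) ∈ LinearMap.ker φ := htop ▸ Submodule.mem_top
    exact this
  have h2 : φ (Pi.single a 1) = 1 := by
    simp [hφ, Pi.single_eq_same, Pi.single_eq_of_ne (Ne.symm hab)]
  rw [h1] at h2
  exact zero_ne_one h2

lemma strictMono_perm_eq_one {m : ℕ} (f : Equiv.Perm (Fin m)) (hf : StrictMono f) :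
    f = 1 := by
  have hinv : StrictMono (f⁻¹ : Equiv.Perm (Fin m)) := by
    intro a b hab
    rw [← hf.lt_iff_lt]
    simpa using hab
  ext i
  have h1 : i ≤ f i := @StrictMono.le_apply (Fin m) _ (inferInstance : WellFoundedLT (Fin m)) f hf i
  have h2 : f i ≤ (f⁻¹ : Equiv.Perm (Fin m)) (f i) :=
    @StrictMono.le_apply (Fin m) _ (inferInstance : WellFoundedLT (Fin m)) _ hinv (f i)
  rw [show f⁻¹ (f i) = i by simp] at h2
  have : f i = i := le_antisymm h2 h1
  simp [this]

lemma orthoscheme_inter_null {m : ℕ} (τ τ' : Equiv.Perm (Fin m)) (hne : τ ≠ τ') :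
    volume (orthoscheme τ ∩ orthoscheme τ') = 0 := by
  have hex : ∃ a b : Fin m, τ a < τ b ∧ τ' b < τ' a := by
    by_contra hcon
    push_neg at hcon
    apply hne
    have hsm : StrictMono ((τ' * τ⁻¹ : Equiv.Perm (Fin m)) : Fin m → Fin m) := by
      intro c d hcd
      have h1 : τ (τ⁻¹ c) < τ (τ⁻¹ d) := by
        simpa using hcd
      have h2 : τ' (τ⁻¹ d) ≥ τ' (τ⁻¹ c) := hcon _ _ h1
      rcases lt_or_eq_of_le h2 with h | h
      · simpa [Equiv.Perm.mul_apply] using h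
      · exfalso
        have hinj := τ'.injective h
        have hc : c = d := by
          have := congrArg τ hinj
          simpa using this
        exact absurd hc (ne_of_lt hcd)
    have := strictMono_perm_eq_one _ hsm
    have : τ' * τ⁻¹ = 1 := this
    calc τ = 1 * τ := by group
    _ = (τ' * τ⁻¹) * τ := by rw [this]
    _ = τ' := by group
  obtain ⟨a, b, h1, h2⟩ := hex
  have hab : a ≠ b := by
    intro h; rw [h] at h1; exact lt_irrefl _ h1
  have hsub : orthoscheme τ ∩ orthoscheme τ' ⊆ {x : Fin m → ℝ | x a = x b} := by
    rintro x ⟨hx1, hx2⟩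
    have e1 : x a ≤ x b := hx1.2 a b (le_of_lt h1)
    have e2 : x b ≤ x a := hx2.2 b a (le_of_lt h2)
    exact le_antisymm e1 e2
  exact measure_mono_null hsub (eq_coord_null a b hab)

lemma orthoscheme_volume_eq {m : ℕ} (τ : Equiv.Perm (Fin m)) :
    volume (orthoscheme τ) = volume (orthoscheme (1 : Equiv.Perm (Fin m))) := by
  have hmp := MeasureTheory.volume_measurePreserving_piCongrLeft (fun _ : Fin m => ℝ) (τ : Fin m ≃ Fin m)
  have hpre : (MeasurableEquiv.piCongrLeft (fun _ : Fin m => ℝ) (τ : Fin m ≃ Fin m)) ⁻¹'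
      (orthoscheme (1 : Equiv.Perm (Fin m))) = orthoscheme τ := by
    ext x
    have happ : ∀ (j : Fin m),
        (MeasurableEquiv.piCongrLeft (fun _ : Fin m => ℝ) (τ : Fin m ≃ Fin m)) x j
          = x (τ.symm j) := by
      intro j
      rw [MeasurableEquiv.coe_piCongrLeft]
      conv_lhs => rw [show j = (τ : Fin m ≃ Fin m) ((τ : Fin m ≃ Fin m).symm j) from
        (Equiv.apply_symm_apply _ j).symm]
      rw [Equiv.piCongrLeft_apply_apply]
    constructor
    · rintro ⟨hx1, hx2⟩
      constructor
      · intro j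
        have := hx1 (τ j)
        rwa [happ, Equiv.symm_apply_apply] at this
      · intro a b hab
        have := hx2 (τ a) (τ b) (by simpa using hab)
        rwa [happ, happ, Equiv.symm_apply_apply, Equiv.symm_apply_apply] at this
    · rintro ⟨hx1, hx2⟩
      constructor
      · intro j
        rw [happ]
        exact hx1 _
      · intro a b hab
        rw [happ, happ]
        exact hx2 _ _ (by simpa using hab)
  calc volume (orthoscheme τ)
      = volume ((MeasurableEquiv.piCongrLeft (fun _ : Fin m => ℝ) (τ : Fin m ≃ Fin m)) ⁻¹'
        (orthoscheme (1 : Equiv.Perm (Fin m)))) := by rw [hpre]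
    _ = volume (orthoscheme (1 : Equiv.Perm (Fin m))) :=
        hmp.measure_preimage (orthoscheme_measurable _).nullMeasurableSet


/-- (i) each orthoscheme has volume `1/m!`; (ii) distinct orthoschemes meet in
measure zero; (iii) orthoschemes of down-up alternating permutations lie in `O_m`, whose
union they form. -/
theorem orthoscheme_volume_disjoint_union (m : ℕ) (hm : 1 ≤ m) :
    (∀ τ : Equiv.Perm (Fin m), volume (orthoscheme τ) = ((Nat.factorial m : ℝ≥0∞))⁻¹) ∧
    (∀ τ τ' : Equiv.Perm (Fin m), τ ≠ τ' →
      volume (orthoscheme τ ∩ orthoscheme τ') = 0) ∧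
    (∀ τ : Equiv.Perm (Fin m), DownUp τ → orthoscheme τ ⊆ Ozz m) ∧
    Ozz m = ⋃ τ ∈ {τ : Equiv.Perm (Fin m) | DownUp τ}, orthoscheme τ := by
  have part2 : ∀ τ τ' : Equiv.Perm (Fin m), τ ≠ τ' →
      volume (orthoscheme τ ∩ orthoscheme τ') = 0 := fun τ τ' h => orthoscheme_inter_null τ τ' h
  have part3 : ∀ τ : Equiv.Perm (Fin m), DownUp τ → orthoscheme τ ⊆ Ozz m := by
    intro τ hτ x hx
    refine ⟨hx.1, ?_⟩
    intro j h
    have := hτ j h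
    by_cases hj : Even j
    · rw [if_pos hj] at this ⊢
      exact hx.2 _ _ (le_of_lt this)
    · rw [if_neg hj] at this ⊢
      exact hx.2 _ _ (le_of_lt this)
  -- part 1: volumes
  have part1 : ∀ τ : Equiv.Perm (Fin m), volume (orthoscheme τ) = ((Nat.factorial m : ℝ≥0∞))⁻¹ := by
    have hcube : {x : Fin m → ℝ | ∀ j, x j ∈ Set.Icc (0:ℝ) 1} =
        ⋃ τ : Equiv.Perm (Fin m), orthoscheme τ := by
      ext x
      constructor
      · intro hx
        obtain ⟨τ, h1, -⟩ := exists_perm_sort x (fun a => a.val)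
          (fun a b h => Fin.ext h)
        exact Set.mem_iUnion.2 ⟨τ, hx, h1⟩
      · intro hx
        obtain ⟨τ, hτ⟩ := Set.mem_iUnion.1 hx
        exact hτ.1
    have hvol1 : volume {x : Fin m → ℝ | ∀ j, x j ∈ Set.Icc (0:ℝ) 1} = 1 := by
      have : {x : Fin m → ℝ | ∀ j, x j ∈ Set.Icc (0:ℝ) 1} =
          Set.pi Set.univ (fun _ : Fin m => Set.Icc (0:ℝ) 1) := by
        ext x
        simp only [Set.mem_setOf_eq, Set.mem_pi, Set.mem_univ, true_implies]
      rw [this, volume_pi_pi]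
      simp [Real.volume_Icc]
    have hsum : volume (⋃ τ : Equiv.Perm (Fin m), orthoscheme τ) =
        ∑' τ : Equiv.Perm (Fin m), volume (orthoscheme τ) := by
      refine measure_iUnion₀ ?_ (fun τ => (orthoscheme_measurable τ).nullMeasurableSet)
      intro τ τ' h
      exact part2 τ τ' h
    set v := volume (orthoscheme (1 : Equiv.Perm (Fin m))) with hv
    have hconst : ∑' τ : Equiv.Perm (Fin m), volume (orthoscheme τ) =
        (Nat.factorial m : ℝ≥0∞) * v := by
      rw [tsum_fintype]
      have : ∀ τ : Equiv.Perm (Fin m), volume (orthoscheme τ) = v :=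
        fun τ => orthoscheme_volume_eq τ
      simp only [this]
      rw [Finset.sum_const, Finset.card_univ]
      have hcard : Fintype.card (Equiv.Perm (Fin m)) = Nat.factorial m := by
        rw [Fintype.card_perm, Fintype.card_fin]
      rw [hcard, nsmul_eq_mul]
    have hone : (Nat.factorial m : ℝ≥0∞) * v = 1 := by
      rw [← hconst, ← hsum, ← hcube, hvol1]
    have hfact0 : (Nat.factorial m : ℝ≥0∞) ≠ 0 := by
      simp [Nat.factorial_ne_zero]
    have hfacttop : (Nat.factorial m : ℝ≥0∞) ≠ ⊤ := ENNReal.natCast_ne_top _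
    have hveq : v = ((Nat.factorial m : ℝ≥0∞))⁻¹ := by
      have := congrArg (fun z => ((Nat.factorial m : ℝ≥0∞))⁻¹ * z) hone
      simp only [← mul_assoc, ENNReal.inv_mul_cancel hfact0 hfacttop, one_mul, mul_one] at this
      exact this
    intro τ
    rw [orthoscheme_volume_eq τ, ← hv, hveq]
  refine ⟨part1, part2, part3, ?_⟩
  -- part 4: union
  apply Set.Subset.antisymm
  · intro x hx
    set tb : Fin m → ℕ := fun a => if Even a.val then a.val + m else a.val with htbdef
    have htb : Function.Injective tb := by
      intro a b hab
      simp only [htbdef] at hab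
      by_cases ha : Even a.val <;> by_cases hb : Even b.val <;>
        simp [ha, hb] at hab
      · exact Fin.ext hab
      · omega
      · omega
      · exact Fin.ext hab
    obtain ⟨τ, h1, h2⟩ := exists_perm_sort x tb htb
    have hdu : DownUp τ := by
      intro i h
      have hzz := hx.2 i h
      by_cases hi : Even i
      · rw [if_pos hi] at hzz ⊢
        rw [h2]
        rcases lt_or_eq_of_le hzz with hlt | heq
        · exact Or.inl hlt
        · refine Or.inr ⟨heq, ?_⟩
          have hi1 : ¬ Even (i+1) := by simp [Nat.even_add_one, hi]
          have e1 : tb ⟨i+1, h⟩ = i+1 := by simp [htbdef, hi1]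
          have e2 : tb ⟨i, Nat.lt_of_succ_lt h⟩ = i + m := by simp [htbdef, hi]
          rw [e1, e2]
          omega
      · rw [if_neg hi] at hzz ⊢
        rw [h2]
        rcases lt_or_eq_of_le hzz with hlt | heq
        · exact Or.inl hlt
        · refine Or.inr ⟨heq, ?_⟩
          have hi1 : Even (i+1) := Nat.even_add_one.2 hi
          have e1 : tb ⟨i, Nat.lt_of_succ_lt h⟩ = i := by simp [htbdef, hi]
          have e2 : tb ⟨i+1, h⟩ = i + 1 + m := by simp [htbdef, hi1]
          rw [e1, e2]
          omega
    exact Set.mem_biUnion hdu ⟨hx.1, h1⟩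
  · intro x hx
    obtain ⟨τ, hτ, hxτ⟩ := Set.mem_iUnion₂.1 hx
    exact part3 τ hτ hxτ
end

section
/- For every m ≥ 1, the Lebesgue volume of the zig-zag order polytope O_m equals E_m/m!, where E_m is the Euler number (the number of down-up alternating permutations of {1,…,m}). -/
open scoped Classical ENNReal

open MeasureTheory

variable {m : ℕ}

/-- the closed simplex of a permutation -/
def Ssimp (σ : Equiv.Perm (Fin m)) : Set (Fin m → ℝ) :=
  {x | (∀ j, x j ∈ Set.Icc (0:ℝ) 1) ∧ Monotone (x ∘ σ)}

lemma measurable_Ssimp (σ : Equiv.Perm (Fin m)) : MeasurableSet (Ssimp σ) := by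
  have h1 : MeasurableSet {x : Fin m → ℝ | ∀ j, x j ∈ Set.Icc (0:ℝ) 1} := by
    rw [Set.setOf_forall]
    exact MeasurableSet.iInter fun j =>
      (measurable_pi_apply j) measurableSet_Icc
  have h2 : MeasurableSet {x : Fin m → ℝ | Monotone (x ∘ σ)} := by
    have : {x : Fin m → ℝ | Monotone (x ∘ σ)} =
        ⋂ (i : Fin m) (j : Fin m) (_ : i ≤ j), {x | x (σ i) ≤ x (σ j)} := by
      ext x; simp [Monotone, Set.mem_iInter]
    rw [this]
    exact MeasurableSet.iInter fun i => MeasurableSet.iInter fun j =>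
      MeasurableSet.iInter fun _ =>
        measurableSet_le (measurable_pi_apply _) (measurable_pi_apply _)
  exact h1.inter h2

lemma Ssimp_vol (σ : Equiv.Perm (Fin m)) :
    volume (Ssimp σ) = volume (Ssimp (1 : Equiv.Perm (Fin m))) := by
  have hmp := volume_measurePreserving_piCongrLeft (fun _ : Fin m => ℝ) σ.symm
  have hpre : Ssimp σ =
      (MeasurableEquiv.piCongrLeft (fun _ : Fin m => ℝ) σ.symm) ⁻¹'
        (Ssimp (1 : Equiv.Perm (Fin m))) := by
    ext x
    have hx : ∀ j, (MeasurableEquiv.piCongrLeft (fun _ : Fin m => ℝ) σ.symm) x j = x (σ j) := by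
      intro j
      simp [MeasurableEquiv.piCongrLeft, Equiv.piCongrLeft, Equiv.piCongrLeft']
    constructor
    · rintro ⟨hbox, hmono⟩
      refine ⟨fun j => by rw [hx]; exact hbox _, ?_⟩
      intro a b hab
      simp only [Function.comp, Equiv.Perm.coe_one, id_eq, hx]
      exact hmono hab
    · rintro ⟨hbox, hmono⟩
      constructor
      · intro j
        have := hbox (σ.symm j)
        rwa [hx, Equiv.apply_symm_apply] at this
      · intro a b hab
        have := hmono hab
        simpa only [Function.comp, Equiv.Perm.coe_one, id_eq, hx] using this
  rw [hpre, hmp.measure_preimage (measurable_Ssimp 1).nullMeasurableSet]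

/-- the key sorting lemma -/
lemma sort_lemma (x : Fin m → ℝ) (t : Fin m → ℤ) (ht : Function.Injective t) :
    ∃ σ : Equiv.Perm (Fin m), Monotone (x ∘ σ) ∧
      ∀ i j : Fin m, (σ⁻¹ i < σ⁻¹ j ↔ toLex (x i, t i) < toLex (x j, t j)) := by
  set k : Fin m → ℝ ×ₗ ℤ := fun i => toLex (x i, t i) with hk
  have hkinj : Function.Injective k := by
    intro a b hab
    apply ht
    have : (ofLex (k a)).2 = (ofLex (k b)).2 := by rw [hab]
    simpa [hk] using this
  set σ := Tuple.sort k with hσ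
  have hmono : Monotone (k ∘ σ) := Tuple.monotone_sort k
  have hstrict : StrictMono (k ∘ σ) :=
    hmono.strictMono_of_injective (hkinj.comp σ.injective)
  refine ⟨σ, ?_, ?_⟩
  · intro a b hab
    have := hmono hab
    have h2 := (Prod.Lex.le_iff (x := toLex (x (σ a), t (σ a))) (y := toLex (x (σ b), t (σ b)))).1 this
    rcases h2 with h | h
    · exact le_of_lt h
    · exact le_of_eq h.1
  · intro i j
    constructor
    · intro h
      have := hstrict h
      simpa [Function.comp, Equiv.apply_symm_apply, hk] using this
    · intro h
      have h2 : (k ∘ σ) (σ⁻¹ i) < (k ∘ σ) (σ⁻¹ j) := by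
        simpa [Function.comp, Equiv.apply_symm_apply, hk] using h
      exact hstrict.lt_iff_lt.1 h2

/-- non-injective points form a null set -/
lemma null_noninj : volume {x : Fin m → ℝ | ¬ Function.Injective x} = 0 := by
  have hsub : {x : Fin m → ℝ | ¬ Function.Injective x} ⊆
      ⋃ (i : Fin m) (j : Fin m) (_ : i ≠ j), {x | x i = x j} := by
    intro x hx
    simp only [Set.mem_setOf_eq, Function.Injective, not_forall] at hx
    obtain ⟨i, j, hij, hne⟩ := hx
    exact Set.mem_iUnion.2 ⟨i, Set.mem_iUnion.2 ⟨j, Set.mem_iUnion.2 ⟨hne, hij⟩⟩⟩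
  refine measure_mono_null hsub ?_
  refine measure_iUnion_null fun i => measure_iUnion_null fun j => measure_iUnion_null fun hij => ?_
  set s : Submodule ℝ (Fin m → ℝ) :=
    LinearMap.ker ((LinearMap.proj i : (Fin m → ℝ) →ₗ[ℝ] ℝ) - LinearMap.proj j) with hs
  have hset : {x : Fin m → ℝ | x i = x j} = (s : Set (Fin m → ℝ)) := by
    ext x
    simp [hs, LinearMap.mem_ker, sub_eq_zero, eq_comm]
  rw [hset]
  apply Measure.addHaar_submodule
  intro htop
  have h1 : (Pi.single i 1 : Fin m → ℝ) ∈ s := htop ▸ Submodule.mem_top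
  simp only [hs, LinearMap.mem_ker, LinearMap.sub_apply, LinearMap.proj_apply] at h1
  rw [Pi.single_eq_same, Pi.single_eq_of_ne (Ne.symm hij)] at h1
  norm_num at h1

lemma Ssimp_inter_null (σ σ' : Equiv.Perm (Fin m)) (hne : σ ≠ σ') :
    volume (Ssimp σ ∩ Ssimp σ') = 0 := by
  have hsub : Ssimp σ ∩ Ssimp σ' ⊆ {x : Fin m → ℝ | ¬ Function.Injective x} := by
    rintro x ⟨⟨_, h1⟩, ⟨_, h2⟩⟩
    intro hinj
    apply hne
    have hs1 : StrictMono (x ∘ σ) := h1.strictMono_of_injective (hinj.comp σ.injective)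
    have hs2 : StrictMono (x ∘ σ') := h2.strictMono_of_injective (hinj.comp σ'.injective)
    have hrange : Set.range (x ∘ σ) = Set.range (x ∘ σ') := by
      rw [Set.range_comp, Set.range_comp, Equiv.range_eq_univ, Equiv.range_eq_univ]
    haveI I : WellFoundedLT (Fin m) := inferInstance
    have := (@StrictMono.range_inj (Fin m) ℝ _ _ I _ _ hs1 hs2).1 hrange
    exact Equiv.ext fun i => hinj (congrFun this i)
  exact measure_mono_null hsub null_noninj

lemma Ssimp_pairwise : Pairwise fun σ σ' : Equiv.Perm (Fin m) =>
    AEDisjoint (volume : Measure (Fin m → ℝ)) (Ssimp σ) (Ssimp σ') := by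
  intro σ σ' hne
  exact Ssimp_inter_null σ σ' hne

lemma vol_Ssimp_one : volume (Ssimp (1 : Equiv.Perm (Fin m))) =
    ((Nat.factorial m : ℝ≥0∞))⁻¹ := by
  have hcover : (Set.pi Set.univ fun _ : Fin m => Set.Icc (0:ℝ) 1) =
      ⋃ σ : Equiv.Perm (Fin m), Ssimp σ := by
    apply Set.Subset.antisymm
    · intro x hx
      have hbox : ∀ j, x j ∈ Set.Icc (0:ℝ) 1 := fun j => hx j (Set.mem_univ j)
      obtain ⟨σ, hmono, -⟩ := sort_lemma x (fun i => ((i : ℕ) : ℤ))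
        (fun a b hab => by
          have hab' : ((a : ℕ) : ℤ) = ((b : ℕ) : ℤ) := hab
          exact Fin.ext (by exact_mod_cast hab'))
      exact Set.mem_iUnion.2 ⟨σ, hbox, hmono⟩
    · intro x hx
      obtain ⟨σ, hbox, -⟩ := Set.mem_iUnion.1 hx
      exact fun j _ => hbox j
  have hvol1 : volume (Set.pi Set.univ fun _ : Fin m => Set.Icc (0:ℝ) 1) = 1 := by
    rw [volume_pi_pi]
    simp [Real.volume_Icc]
  have hsum : volume (⋃ σ : Equiv.Perm (Fin m), Ssimp σ) =
      ∑' σ : Equiv.Perm (Fin m), volume (Ssimp σ) :=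
    measure_iUnion₀ Ssimp_pairwise fun σ => (measurable_Ssimp σ).nullMeasurableSet
  have heq : ∀ σ : Equiv.Perm (Fin m), volume (Ssimp σ) =
      volume (Ssimp (1 : Equiv.Perm (Fin m))) := Ssimp_vol
  have : (1 : ℝ≥0∞) = (Nat.factorial m : ℝ≥0∞) * volume (Ssimp (1 : Equiv.Perm (Fin m))) := by
    rw [← hvol1, hcover, hsum, tsum_fintype]
    simp only [heq]
    rw [Finset.sum_const, Finset.card_univ, Fintype.card_perm, Fintype.card_fin, nsmul_eq_mul]
  rw [← one_div, ENNReal.eq_div_iff (by exact_mod_cast Nat.factorial_ne_zero m)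
    (ENNReal.natCast_ne_top _)]
  exact this.symm

lemma Ozz_eq : Ozz m =
    ⋃ τ : {τ : Equiv.Perm (Fin m) // DownUp τ}, Ssimp ((τ : Equiv.Perm (Fin m))⁻¹) := by
  ext x
  constructor
  · rintro ⟨hbox, hzz⟩
    set t : Fin m → ℤ := fun i => if Even (i : ℕ) then ((i : ℕ) : ℤ) else -((i : ℕ) : ℤ)
      with ht
    have htinj : Function.Injective t := by
      intro a b hab
      simp only [ht] at hab
      apply Fin.ext
      by_cases ha : Even (a : ℕ) <;> by_cases hb : Even (b : ℕ) <;>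
        simp only [if_pos, if_neg, ha, hb, if_true, if_false] at hab <;> omega
    obtain ⟨σ, hmono, hiff⟩ := sort_lemma x t htinj
    refine Set.mem_iUnion.2 ⟨⟨σ⁻¹, ?_⟩, ?_⟩
    · intro j h
      have hj1 : ((⟨j + 1, h⟩ : Fin m) : ℕ) = j + 1 := rfl
      have hj0 : ((⟨j, Nat.lt_of_succ_lt h⟩ : Fin m) : ℕ) = j := rfl
      by_cases hev : Even j
      · rw [if_pos hev]
        apply (hiff _ _).2
        rw [Prod.Lex.lt_iff]
        have hle : x ⟨j + 1, h⟩ ≤ x ⟨j, Nat.lt_of_succ_lt h⟩ := by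
          have := hzz j h; rwa [if_pos hev] at this
        rcases lt_or_eq_of_le hle with hlt | heq
        · exact Or.inl hlt
        · refine Or.inr ⟨heq, ?_⟩
          have hodd : ¬ Even (j + 1) := by simp [Nat.even_add_one, hev]
          simp only [ht, hj1, hj0, if_neg hodd, if_pos hev, ofLex_toLex]
          push_cast; omega
      · rw [if_neg hev]
        apply (hiff _ _).2
        rw [Prod.Lex.lt_iff]
        have hle : x ⟨j, Nat.lt_of_succ_lt h⟩ ≤ x ⟨j + 1, h⟩ := by
          have := hzz j h; rwa [if_neg hev] at this
        rcases lt_or_eq_of_le hle with hlt | heq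
        · exact Or.inl hlt
        · refine Or.inr ⟨heq, ?_⟩
          have hev1 : Even (j + 1) := by simpa [Nat.even_add_one] using hev
          have hj_pos : 1 ≤ j := by
            rcases Nat.eq_zero_or_pos j with rfl | h1
            · exact absurd (Even.zero) hev
            · exact h1
          simp only [ht, hj1, hj0, if_pos hev1, if_neg hev, ofLex_toLex]
          push_cast; omega
    · rw [inv_inv]
      exact ⟨hbox, hmono⟩
  · intro hx
    obtain ⟨τ, hbox, hmono⟩ := Set.mem_iUnion.1 hx
    refine ⟨hbox, ?_⟩
    intro j h
    have hdu := τ.2 j h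
    by_cases hev : Even j
    · rw [if_pos hev]; rw [if_pos hev] at hdu
      have := hmono (le_of_lt hdu)
      simpa [Function.comp, Equiv.symm_apply_apply] using this
    · rw [if_neg hev]; rw [if_neg hev] at hdu
      have := hmono (le_of_lt hdu)
      simpa [Function.comp, Equiv.symm_apply_apply] using this

/-- the Lebesgue volume of the zig-zag order polytope `O_m` is `E_m / m!`. -/
theorem volume_zigzag_order_polytope (m : ℕ) (hm : 1 ≤ m) :
    volume (Ozz m) = (eulerNumber m : ℝ≥0∞) / (Nat.factorial m : ℝ≥0∞) := by
  rw [Ozz_eq]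
  have hpair : Pairwise fun (τ τ' : {τ : Equiv.Perm (Fin m) // DownUp τ}) =>
      AEDisjoint (volume : Measure (Fin m → ℝ)) (Ssimp ((τ : Equiv.Perm (Fin m))⁻¹))
        (Ssimp ((τ' : Equiv.Perm (Fin m))⁻¹)) := by
    intro τ τ' hne
    refine Ssimp_inter_null _ _ fun hcontra => hne (Subtype.ext ?_)
    have := congrArg (·⁻¹) hcontra
    simpa using this
  rw [measure_iUnion₀ hpair fun τ => (measurable_Ssimp _).nullMeasurableSet, tsum_fintype]
  simp only [Ssimp_vol, vol_Ssimp_one]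
  rw [Finset.sum_const, Finset.card_univ, nsmul_eq_mul, eulerNumber, Nat.card_eq_fintype_card,
    div_eq_mul_inv]
end

section
/- For every n ≥ 4, the Lebesgue volume of the polytope P_n(1) ⊂ ℝ^{n−3} equals E_{n−3}/(n−3)!, where E_{n−3} is the Euler number (the number of down-up alternating permutations of {1,…,n−3}). -/
open scoped Classical ENNReal

open MeasureTheory

namespace VolumePn1Aux

variable {m : ℕ}

/-- The simplex-like cell attached to a permutation: points of the cube whose coordinates,
read in the order given by `τ`, are strictly increasing. -/
def cellC (m : ℕ) (τ : Equiv.Perm (Fin m)) : Set (Fin m → ℝ) :=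
  {x | (∀ j, x j ∈ Set.Icc (0 : ℝ) 1) ∧ StrictMono (x ∘ τ)}

def cube (m : ℕ) : Set (Fin m → ℝ) := {x | ∀ j, x j ∈ Set.Icc (0 : ℝ) 1}

lemma measurableSet_cube : MeasurableSet (cube m) := by
  have : cube m = ⋂ j, (fun x : Fin m → ℝ => x j) ⁻¹' Set.Icc (0:ℝ) 1 := by
    ext x; simp [cube]
  rw [this]
  exact MeasurableSet.iInter fun j => (measurable_pi_apply j) measurableSet_Icc

lemma measurableSet_cellC (τ : Equiv.Perm (Fin m)) : MeasurableSet (cellC m τ) := by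
  have : cellC m τ = cube m ∩
      ⋂ (i : Fin m) (j : Fin m) (_ : i < j), {x : Fin m → ℝ | x (τ i) < x (τ j)} := by
    ext x
    simp only [cellC, cube, Set.mem_inter_iff, Set.mem_setOf_eq, Set.mem_iInter]
    exact and_congr Iff.rfl ⟨fun h i j hij => h hij, fun h a b hab => h a b hab⟩
  rw [this]
  refine measurableSet_cube.inter ?_
  refine MeasurableSet.iInter fun i => MeasurableSet.iInter fun j =>
    MeasurableSet.iInter fun _ => ?_
  exact measurableSet_lt (measurable_pi_apply _) (measurable_pi_apply _)

lemma volume_eq_pair (i j : Fin m) (hij : i ≠ j) :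
    volume {x : Fin m → ℝ | x i = x j} = 0 := by
  have h : {x : Fin m → ℝ | x i = x j} =
      ↑(LinearMap.ker ((LinearMap.proj i : (Fin m → ℝ) →ₗ[ℝ] ℝ) - LinearMap.proj j)) := by
    ext x
    simp [LinearMap.mem_ker, sub_eq_zero, eq_comm]
  rw [h]
  apply Measure.addHaar_submodule
  intro htop
  have h1 : (Pi.single i 1 : Fin m → ℝ) ∈ LinearMap.ker
      ((LinearMap.proj i : (Fin m → ℝ) →ₗ[ℝ] ℝ) - LinearMap.proj j) := by
    rw [htop]; trivial
  simp only [LinearMap.mem_ker, LinearMap.sub_apply, LinearMap.proj_apply] at h1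
  rw [Pi.single_eq_same, Pi.single_eq_of_ne (Ne.symm hij)] at h1
  norm_num at h1

lemma volume_nonInj : volume {x : Fin m → ℝ | ¬ Function.Injective x} = 0 := by
  have hsub : {x : Fin m → ℝ | ¬ Function.Injective x} ⊆
      ⋃ (i : Fin m) (j : Fin m) (_ : i ≠ j), {x : Fin m → ℝ | x i = x j} := by
    intro x hx
    simp only [Function.Injective, not_forall] at hx
    obtain ⟨i, j, hxy, hij⟩ := hx
    simp only [Set.mem_iUnion]
    exact ⟨i, j, hij, hxy⟩
  refine measure_mono_null hsub ?_
  refine measure_iUnion_null fun i => measure_iUnion_null fun j => measure_iUnion_null fun hij =>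
    volume_eq_pair i j hij

lemma mp_perm (σ : Equiv.Perm (Fin m)) :
    MeasurePreserving (fun x : Fin m → ℝ => x ∘ σ) volume volume := by
  have h := volume_measurePreserving_piCongrLeft (fun _ : Fin m => ℝ) σ.symm
  have he : ⇑(MeasurableEquiv.piCongrLeft (fun _ : Fin m => ℝ) σ.symm)
      = fun x : Fin m → ℝ => x ∘ σ := by
    funext x
    funext i
    have := Equiv.piCongrLeft_apply_apply (fun _ : Fin m => ℝ) σ.symm x (σ i)
    simpa [MeasurableEquiv.coe_piCongrLeft] using this
  rwa [he] at h

lemma mp_flip : MeasurePreserving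
    (fun (x : Fin m → ℝ) (j : Fin m) => if Even (j : ℕ) then x j else 1 - x j)
    volume volume := by
  have hf : ∀ j : Fin m, MeasurePreserving
      (fun t : ℝ => if Even (j : ℕ) then t else 1 - t) volume volume := by
    intro j
    by_cases hj : Even (j : ℕ)
    · simp only [hj, if_true]; exact MeasurePreserving.id (volume : Measure ℝ)
    · simpa [hj] using Measure.measurePreserving_sub_left (volume : Measure ℝ) (1 : ℝ)
  exact volume_preserving_pi hf

lemma preimage_cell (σ τ : Equiv.Perm (Fin m)) :
    (fun x : Fin m → ℝ => x ∘ σ) ⁻¹' cellC m τ = cellC m (σ * τ) := by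
  ext x
  simp only [cellC, Set.mem_preimage, Set.mem_setOf_eq]
  constructor
  · rintro ⟨hb, hs⟩
    refine ⟨fun j => by simpa using hb (σ.symm j), ?_⟩
    have : (x ∘ σ) ∘ τ = x ∘ (σ * τ) := by
      funext i; simp [Equiv.Perm.mul_apply]
    rwa [this] at hs
  · rintro ⟨hb, hs⟩
    refine ⟨fun j => hb (σ j), ?_⟩
    have : (x ∘ σ) ∘ τ = x ∘ (σ * τ) := by
      funext i; simp [Equiv.Perm.mul_apply]
    rwa [this]

lemma cell_volume_const (τ : Equiv.Perm (Fin m)) :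
    volume (cellC m τ) = volume (cellC m 1) := by
  have h := (mp_perm τ).measure_preimage (measurableSet_cellC 1).nullMeasurableSet
  rw [preimage_cell τ 1, mul_one] at h
  exact h

lemma injective_of_cell {τ : Equiv.Perm (Fin m)} {x : Fin m → ℝ} (hx : x ∈ cellC m τ) :
    Function.Injective x := by
  have h : Function.Injective (x ∘ τ) := hx.2.injective
  intro a b hab
  have h2 : (x ∘ τ) (τ.symm a) = (x ∘ τ) (τ.symm b) := by simp [hab]
  exact τ.symm.injective (h h2)

lemma cell_disjoint : Pairwise (Function.onFun Disjoint (cellC m)) := by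
  intro τ σ hne
  rw [Function.onFun, Set.disjoint_left]
  intro x hxτ hxσ
  apply hne
  have hinj : Function.Injective x := injective_of_cell hxτ
  set s : Finset ℝ := Finset.image x Finset.univ with hs
  have hcard : s.card = m := by
    rw [hs, Finset.card_image_of_injective _ hinj, Finset.card_univ, Fintype.card_fin]
  have hmem : ∀ (ρ : Equiv.Perm (Fin m)) (i : Fin m), (x ∘ ρ) i ∈ s := by
    intro ρ i; exact Finset.mem_image_of_mem x (Finset.mem_univ _)
  have h1 := Finset.orderEmbOfFin_unique hcard (hmem τ) hxτ.2
  have h2 := Finset.orderEmbOfFin_unique hcard (hmem σ) hxσ.2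
  have hcomp : x ∘ τ = x ∘ σ := h1.trans h2.symm
  apply Equiv.ext
  intro i
  exact hinj (congrFun hcomp i)

lemma cell_union : (⋃ τ : Equiv.Perm (Fin m), cellC m τ)
    = cube m ∩ {x | Function.Injective x} := by
  ext x
  simp only [Set.mem_iUnion, Set.mem_inter_iff, Set.mem_setOf_eq]
  constructor
  · rintro ⟨τ, hb, hs⟩
    exact ⟨hb, injective_of_cell ⟨hb, hs⟩⟩
  · rintro ⟨hb, hinj⟩
    refine ⟨Tuple.sort x, hb, ?_⟩
    refine (Tuple.monotone_sort x).strictMono_of_injective ?_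
    exact hinj.comp (Tuple.sort x).injective

lemma volume_cube : volume (cube m) = 1 := by
  have : cube m = Set.pi Set.univ (fun _ : Fin m => Set.Icc (0:ℝ) 1) := by
    ext x; simp [cube, Set.mem_pi, Set.mem_Icc, Pi.le_def, forall_and]
  rw [this, volume_pi_pi]
  simp [Real.volume_Icc]

lemma volume_cell (τ : Equiv.Perm (Fin m)) :
    volume (cellC m τ) = ((Nat.factorial m : ℝ≥0∞))⁻¹ := by
  have hU := measure_iUnion (μ := (volume : Measure (Fin m → ℝ)))
    cell_disjoint (fun σ => measurableSet_cellC σ)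
  rw [cell_union, tsum_fintype] at hU
  have hfull : volume (cube m ∩ {x : Fin m → ℝ | Function.Injective x}) = 1 := by
    refine le_antisymm ?_ ?_
    · exact le_trans (measure_mono Set.inter_subset_left) volume_cube.le
    · have hsub : cube m ⊆ (cube m ∩ {x : Fin m → ℝ | Function.Injective x})
          ∪ {x : Fin m → ℝ | ¬ Function.Injective x} := by
        intro x hx
        by_cases hxi : Function.Injective x
        · exact Or.inl ⟨hx, hxi⟩
        · exact Or.inr hxi
      calc (1 : ℝ≥0∞) = volume (cube m) := volume_cube.symm
        _ ≤ volume ((cube m ∩ {x : Fin m → ℝ | Function.Injective x})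
            ∪ {x : Fin m → ℝ | ¬ Function.Injective x}) := measure_mono hsub
        _ ≤ volume (cube m ∩ {x : Fin m → ℝ | Function.Injective x})
            + volume {x : Fin m → ℝ | ¬ Function.Injective x} := measure_union_le _ _
        _ = volume (cube m ∩ {x : Fin m → ℝ | Function.Injective x}) := by
            rw [volume_nonInj, add_zero]
  rw [hfull] at hU
  have hsum : (Nat.factorial m : ℝ≥0∞) * volume (cellC m 1) = 1 := by
    rw [hU]
    rw [Finset.sum_congr rfl (fun σ _ => cell_volume_const σ), Finset.sum_const,
      Finset.card_univ, Fintype.card_perm, Fintype.card_fin, nsmul_eq_mul]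
  have hne : (Nat.factorial m : ℝ≥0∞) ≠ 0 := by
    exact_mod_cast Nat.factorial_ne_zero m
  have htop : (Nat.factorial m : ℝ≥0∞) ≠ ⊤ := ENNReal.natCast_ne_top _
  have hkey : volume (cellC m 1) = ((Nat.factorial m : ℝ≥0∞))⁻¹ := by
    have h2 : ((Nat.factorial m : ℝ≥0∞))⁻¹ * ((Nat.factorial m : ℝ≥0∞)
        * volume (cellC m 1)) = volume (cellC m 1) := by
      rw [← mul_assoc, ENNReal.inv_mul_cancel hne htop, one_mul]
    rw [hsum, mul_one] at h2
    exact h2.symm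
  exact (cell_volume_const τ).trans hkey

/-- Cells of permutations with down-up inverse lie in the zig-zag polytope. -/
lemma cell_subset_Ozz {τ : Equiv.Perm (Fin m)} (hτ : DownUp τ⁻¹) :
    cellC m τ ⊆ Ozz m := by
  rintro x ⟨hb, hs⟩
  refine ⟨hb, ?_⟩
  intro j h
  have key : ∀ a b : Fin m, τ⁻¹ a < τ⁻¹ b → x a < x b := by
    intro a b hab
    have := hs hab
    simpa [Function.comp, Equiv.Perm.inv_def] using this
  have hd := hτ j h
  by_cases hj : Even j
  · simp only [hj, if_true] at hd ⊢
    exact (key _ _ hd).le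
  · simp only [hj, if_false] at hd ⊢
    exact (key _ _ hd).le

/-- Points of the zig-zag polytope with injective coordinates lie in a down-up cell. -/
lemma Ozz_inj_subset (x : Fin m → ℝ) (hx : x ∈ Ozz m) (hinj : Function.Injective x) :
    ∃ τ : Equiv.Perm (Fin m), DownUp τ⁻¹ ∧ x ∈ cellC m τ := by
  set τ := Tuple.sort x with hτ
  have hs : StrictMono (x ∘ τ) :=
    (Tuple.monotone_sort x).strictMono_of_injective (hinj.comp τ.injective)
  refine ⟨τ, ?_, hx.1, hs⟩
  intro i h
  have hxc := hx.2 i h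
  have key : ∀ a b : Fin m, a ≠ b → x a ≤ x b → τ⁻¹ a < τ⁻¹ b := by
    intro a b hne hle
    have hlt : x a < x b := lt_of_le_of_ne hle (fun hh => hne (hinj hh))
    have : (x ∘ τ) (τ⁻¹ a) < (x ∘ τ) (τ⁻¹ b) := by
      simpa [Function.comp, Equiv.Perm.inv_def] using hlt
    exact hs.lt_iff_lt.mp this
  have hne : (⟨i + 1, h⟩ : Fin m) ≠ ⟨i, Nat.lt_of_succ_lt h⟩ := by
    simp [Fin.ext_iff]
  by_cases hi : Even i
  · simp only [hi, if_true] at hxc ⊢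
    exact key _ _ hne hxc
  · simp only [hi, if_false] at hxc ⊢
    exact key _ _ hne.symm hxc

lemma card_filter_eq : (Finset.univ.filter (fun τ : Equiv.Perm (Fin m) => DownUp τ⁻¹)).card
    = eulerNumber m := by
  rw [eulerNumber, Nat.card_eq_fintype_card, ← Fintype.card_subtype]
  exact Fintype.card_congr
    ((Equiv.inv (Equiv.Perm (Fin m))).subtypeEquiv (fun τ => Iff.rfl)).symm

lemma volume_Ozz : volume (Ozz m)
    = (eulerNumber m : ℝ≥0∞) / (Nat.factorial m : ℝ≥0∞) := by
  set A : Finset (Equiv.Perm (Fin m)) :=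
    Finset.univ.filter (fun τ => DownUp τ⁻¹) with hA
  have hUnion : volume (⋃ τ ∈ A, cellC m τ) = ∑ τ ∈ A, volume (cellC m τ) := by
    refine measure_biUnion_finset ?_ (fun τ _ => measurableSet_cellC τ)
    intro τ _ σ _ hne
    exact cell_disjoint hne
  have hle : volume (Ozz m) ≤ ∑ τ ∈ A, volume (cellC m τ) := by
    have hsub : Ozz m ⊆ (⋃ τ ∈ A, cellC m τ) ∪ {x : Fin m → ℝ | ¬ Function.Injective x} := by
      intro x hx
      by_cases hxi : Function.Injective x
      · obtain ⟨τ, hτ, hcell⟩ := Ozz_inj_subset x hx hxi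
        exact Or.inl (Set.mem_biUnion
          (by rw [hA]; exact Finset.mem_filter.mpr ⟨Finset.mem_univ _, hτ⟩) hcell)
      · exact Or.inr hxi
    calc volume (Ozz m) ≤ volume ((⋃ τ ∈ A, cellC m τ)
          ∪ {x : Fin m → ℝ | ¬ Function.Injective x}) := measure_mono hsub
      _ ≤ volume (⋃ τ ∈ A, cellC m τ)
          + volume {x : Fin m → ℝ | ¬ Function.Injective x} := measure_union_le _ _
      _ = ∑ τ ∈ A, volume (cellC m τ) := by rw [volume_nonInj, add_zero, hUnion]
  have hge : ∑ τ ∈ A, volume (cellC m τ) ≤ volume (Ozz m) := by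
    rw [← hUnion]
    refine measure_mono (Set.iUnion₂_subset fun τ hτ => ?_)
    exact cell_subset_Ozz (by simpa [hA] using hτ)
  have hOzz : volume (Ozz m) = ∑ τ ∈ A, volume (cellC m τ) := le_antisymm hle hge
  rw [hOzz, Finset.sum_congr rfl (fun τ _ => volume_cell τ), Finset.sum_const,
    nsmul_eq_mul, hA, card_filter_eq, ENNReal.div_eq_inv_mul, mul_comm]

lemma measurableSet_Pn1 (n : ℕ) : MeasurableSet (Pn1 n) := by
  have : Pn1 n = cube (n - 3) ∩
      ⋂ (j : ℕ) (h : j + 1 < n - 3),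
        {d : Fin (n - 3) → ℝ | 1 ≤ d ⟨j, Nat.lt_of_succ_lt h⟩ + d ⟨j + 1, h⟩} := by
    ext d
    simp only [Pn1, cube, Set.mem_inter_iff, Set.mem_setOf_eq, Set.mem_iInter]
  rw [this]
  refine measurableSet_cube.inter ?_
  refine MeasurableSet.iInter fun j => MeasurableSet.iInter fun h => ?_
  exact measurableSet_le measurable_const
    ((measurable_pi_apply (⟨j, Nat.lt_of_succ_lt h⟩ : Fin (n - 3))).add
      (measurable_pi_apply (⟨j + 1, h⟩ : Fin (n - 3))))

lemma flip_preimage (n : ℕ) :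
    (fun (x : Fin (n - 3) → ℝ) (j : Fin (n - 3)) => if Even (j : ℕ) then x j else 1 - x j)
      ⁻¹' Pn1 n = Ozz (n - 3) := by
  ext x
  simp only [Set.mem_preimage, Pn1, Ozz, Set.mem_setOf_eq]
  refine and_congr (forall_congr' fun j => ?_)
    (forall_congr' fun j => forall_congr' fun h => ?_)
  · by_cases hj : Even (j : ℕ) <;>
      simp only [hj, if_true, if_false, Set.mem_Icc] <;>
      constructor <;> rintro ⟨h1, h2⟩ <;> constructor <;> linarith
  · have hj1 : ((⟨j, Nat.lt_of_succ_lt h⟩ : Fin (n - 3)) : ℕ) = j := rfl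
    have hj2 : ((⟨j + 1, h⟩ : Fin (n - 3)) : ℕ) = j + 1 := rfl
    by_cases hj : Even j
    · have hj' : ¬ Even (j + 1) := by simp [Nat.even_add_one, hj]
      simp only [hj1, hj2, hj, hj', if_true, if_false]
      constructor <;> intro hh <;> linarith
    · have hj' : Even (j + 1) := by simp [Nat.even_add_one, hj]
      simp only [hj1, hj2, hj, hj', if_true, if_false]
      constructor <;> intro hh <;> linarith

end VolumePn1Aux

/-- for `n ≥ 4`, the Lebesgue volume of `P_n(1) ⊆ ℝ^{n-3}` is
`E_{n-3} / (n-3)!`. -/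
theorem volume_Pn1 (n : ℕ) (hn : 4 ≤ n) :
    volume (Pn1 n) = (eulerNumber (n - 3) : ℝ≥0∞) / (Nat.factorial (n - 3) : ℝ≥0∞) := by
  have h := VolumePn1Aux.mp_flip.measure_preimage
    (VolumePn1Aux.measurableSet_Pn1 n).nullMeasurableSet
  rw [VolumePn1Aux.flip_preimage n] at h
  rw [← h]
  exact VolumePn1Aux.volume_Ozz
end

section
/- Fix x ∈ (0,1] and define g_x : [0,1] → [0,1] by g_x(u) = 1 − (2/π)·arcsin(u·sin(πx/2)). Then the pushforward under g_x of the uniform probability measure on [0,1] is the probability measure on [0,1] whose density with respect to Lebesgue measure is f_x. -/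
open scoped Classical

open MeasureTheory

/-- The conditional density `f_x(y) = (π/2)·sin(πy/2)/sin(πx/2)` for `y ≥ 1 - x`, and `0`
otherwise. -/
noncomputable def fdens (x y : ℝ) : ℝ :=
  if 1 - x ≤ y then (Real.pi / 2) * Real.sin (Real.pi * y / 2) / Real.sin (Real.pi * x / 2)
  else 0

open Real Set

lemma integral_aux (x b t : ℝ) (hs : Real.sin (Real.pi * x / 2) ≠ 0) :
    ∫ y in b..t, Real.pi / 2 * Real.sin (Real.pi * y / 2) / Real.sin (Real.pi * x / 2)
      = (Real.cos (Real.pi * b / 2) - Real.cos (Real.pi * t / 2)) / Real.sin (Real.pi * x / 2) := by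
  have key : ∀ u : ℝ, HasDerivAt (fun y : ℝ => -Real.cos (Real.pi * y / 2) / Real.sin (Real.pi * x / 2))
      (Real.pi / 2 * Real.sin (Real.pi * u / 2) / Real.sin (Real.pi * x / 2)) u := by
    intro u
    have h1 : HasDerivAt (fun y : ℝ => Real.pi * y / 2) (Real.pi / 2) u := by
      simpa using ((hasDerivAt_id u).const_mul Real.pi).div_const 2
    have h2 := (Real.hasDerivAt_cos (Real.pi * u / 2)).comp u h1
    have h3 := (h2.neg).div_const (Real.sin (Real.pi * x / 2))
    exact h3.congr_deriv (by ring)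
  have hint : IntervalIntegrable
      (fun y : ℝ => Real.pi / 2 * Real.sin (Real.pi * y / 2) / Real.sin (Real.pi * x / 2))
      volume b t := by
    apply Continuous.intervalIntegrable
    continuity
  rw [intervalIntegral.integral_eq_sub_of_hasDerivAt (fun u _ => key u) hint]
  ring

set_option maxHeartbeats 1000000 in
/-- for `x ∈ (0,1]`, the pushforward under
`g_x(u) = 1 - (2/π)·arcsin(u·sin(πx/2))` of the uniform probability measure on `[0,1]` is
the probability measure on `[0,1]` with density `f_x` with respect to Lebesgue measure. -/
theorem pushforward_uniform_eq_fdens (x : ℝ) (hx : x ∈ Set.Ioc (0 : ℝ) 1) :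
    Measure.map (fun u : ℝ => 1 - (2 / Real.pi) * Real.arcsin (u * Real.sin (Real.pi * x / 2)))
        (volume.restrict (Set.Icc (0 : ℝ) 1)) =
      (volume.restrict (Set.Icc (0 : ℝ) 1)).withDensity
        (fun y => ENNReal.ofReal (fdens x y)) := by
  obtain ⟨hx0, hx1⟩ := hx
  set s : ℝ := Real.sin (Real.pi * x / 2) with hs_def
  have hpi : (0 : ℝ) < Real.pi := Real.pi_pos
  have hxpi : Real.pi * x / 2 ≤ Real.pi / 2 := by nlinarith
  have hs0 : 0 < s := by
    apply Real.sin_pos_of_pos_of_lt_pi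
    · positivity
    · nlinarith
  have hs1 : s ≤ 1 := Real.sin_le_one _
  set g : ℝ → ℝ := fun u : ℝ => 1 - (2 / Real.pi) * Real.arcsin (u * s) with hg_def
  have hgc : Continuous g := by
    apply continuous_const.sub
    exact continuous_const.mul (Real.continuous_arcsin.comp (continuous_id.mul continuous_const))
  have hgm : Measurable g := hgc.measurable
  -- cos (π(1-x)/2) = s
  have hcos1x : Real.cos (Real.pi * (1 - x) / 2) = s := by
    have : Real.pi * (1 - x) / 2 = Real.pi / 2 - Real.pi * x / 2 := by ring
    rw [this, Real.cos_pi_div_two_sub]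
  haveI : IsFiniteMeasure (Measure.map g (volume.restrict (Set.Icc (0 : ℝ) 1))) := by
    apply Measure.isFiniteMeasure_map
  refine Measure.ext_of_Iic _ _ (fun a => ?_)
  rw [Measure.map_apply hgm measurableSet_Iic, Measure.restrict_apply (hgm measurableSet_Iic),
    withDensity_apply _ measurableSet_Iic, Measure.restrict_restrict measurableSet_Iic]
  by_cases ha : a < 1 - x
  · -- both sides zero
    have hL : g ⁻¹' Set.Iic a ∩ Set.Icc 0 1 = ∅ := by
      ext u
      simp only [Set.mem_inter_iff, Set.mem_preimage, Set.mem_Iic, Set.mem_Icc,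
        Set.mem_empty_iff_false, iff_false]
      rintro ⟨hga, hu0, hu1⟩
      have hus0 : 0 ≤ u * s := by positivity
      have hus : u * s ≤ s := by nlinarith
      have h1 : Real.arcsin (u * s) ≤ Real.arcsin s := Real.monotone_arcsin hus
      have h2 : Real.arcsin s = Real.pi * x / 2 := by
        rw [hs_def, Real.arcsin_sin] <;> nlinarith
      have h3 : (2 / Real.pi) * Real.arcsin (u * s) ≤ x := by
        rw [h2] at h1
        have := mul_le_mul_of_nonneg_left h1 (le_of_lt (by positivity : (0:ℝ) < 2 / Real.pi))
        calc (2 / Real.pi) * Real.arcsin (u * s) ≤ (2 / Real.pi) * (Real.pi * x / 2) := this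
          _ = x := by field_simp
      have : 1 - x ≤ g u := by rw [hg_def]; simp only; linarith
      linarith
    have hR : ∀ y ∈ Set.Iic a ∩ Set.Icc (0:ℝ) 1, ENNReal.ofReal (fdens x y) = 0 := by
      rintro y ⟨hy, -⟩
      have : ¬ (1 - x ≤ y) := by simp only [Set.mem_Iic] at hy; linarith
      simp [fdens, this]
    rw [hL, setLIntegral_congr_fun (measurableSet_Iic.inter measurableSet_Icc)
      hR]
    simp
  · push_neg at ha
    set t : ℝ := min a 1 with ht_def
    have ht1 : 1 - x ≤ t := le_min ha (by linarith)
    have ht2 : t ≤ 1 := min_le_right _ _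
    have ht0 : 0 ≤ t := by linarith
    have hta : t ≤ a := min_le_left _ _
    set c : ℝ := Real.cos (Real.pi * t / 2) / s with hc_def
    have hcosnn : 0 ≤ Real.cos (Real.pi * t / 2) := by
      apply Real.cos_nonneg_of_mem_Icc
      constructor <;> nlinarith
    have hcos_le : Real.cos (Real.pi * t / 2) ≤ s := by
      rw [← hcos1x]
      apply Real.cos_le_cos_of_nonneg_of_le_pi <;> nlinarith
    have hc0 : 0 ≤ c := by positivity
    have hc1 : c ≤ 1 := by rw [hc_def, div_le_one hs0]; exact hcos_le
    -- LHS set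
    have hL : g ⁻¹' Set.Iic a ∩ Set.Icc 0 1 = Set.Icc c 1 := by
      ext u
      simp only [Set.mem_inter_iff, Set.mem_preimage, Set.mem_Iic, Set.mem_Icc]
      constructor
      · rintro ⟨hga, hu0, hu1⟩
        refine ⟨?_, hu1⟩
        have hus0 : 0 ≤ u * s := by positivity
        have hus1 : u * s ≤ 1 := by nlinarith
        have harc : Real.pi / 2 * (1 - a) ≤ Real.arcsin (u * s) := by
          rw [hg_def] at hga; simp only at hga
          have h1 : 1 - a ≤ (2 / Real.pi) * Real.arcsin (u * s) := by linarith
          have := mul_le_mul_of_nonneg_left h1 (le_of_lt (by positivity : (0:ℝ) < Real.pi / 2))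
          calc Real.pi / 2 * (1 - a) ≤ Real.pi / 2 * ((2 / Real.pi) * Real.arcsin (u * s)) := this
            _ = Real.arcsin (u * s) := by field_simp
        have harct : Real.pi / 2 * (1 - t) ≤ Real.arcsin (u * s) := by
          rcases min_cases a 1 with ⟨heq, -⟩ | ⟨heq, -⟩
          · rw [ht_def, heq]; exact harc
          · rw [ht_def, heq]
            have : Real.arcsin (u * s) ≥ 0 := Real.arcsin_nonneg.2 hus0
            simpa using this
        have hsin : Real.sin (Real.pi / 2 * (1 - t)) ≤ u * s := by
          rw [← Real.le_arcsin_iff_sin_le ⟨by nlinarith, by nlinarith⟩ ⟨by linarith, hus1⟩]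
          exact harct
        have hsineq : Real.sin (Real.pi / 2 * (1 - t)) = Real.cos (Real.pi * t / 2) := by
          have : Real.pi / 2 * (1 - t) = Real.pi / 2 - Real.pi * t / 2 := by ring
          rw [this, Real.sin_pi_div_two_sub]
        rw [hc_def, div_le_iff₀ hs0]
        rw [hsineq] at hsin
        linarith [hsin]
      · rintro ⟨hcu, hu1⟩
        have hu0 : 0 ≤ u := le_trans hc0 hcu
        refine ⟨?_, hu0, hu1⟩
        have hus0 : 0 ≤ u * s := by positivity
        have hus1 : u * s ≤ 1 := by nlinarith
        have hsin : Real.sin (Real.pi / 2 * (1 - t)) ≤ u * s := by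
          have hsineq : Real.sin (Real.pi / 2 * (1 - t)) = Real.cos (Real.pi * t / 2) := by
            have : Real.pi / 2 * (1 - t) = Real.pi / 2 - Real.pi * t / 2 := by ring
            rw [this, Real.sin_pi_div_two_sub]
          rw [hsineq]
          rw [hc_def, div_le_iff₀ hs0] at hcu
          linarith
        have harct : Real.pi / 2 * (1 - t) ≤ Real.arcsin (u * s) :=
          (Real.le_arcsin_iff_sin_le ⟨by nlinarith, by nlinarith⟩ ⟨by linarith, hus1⟩).2 hsin
        have : g u ≤ t := by
          rw [hg_def]; simp only
          have h1 : (2 / Real.pi) * (Real.pi / 2 * (1 - t)) ≤ (2 / Real.pi) * Real.arcsin (u * s) :=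
            mul_le_mul_of_nonneg_left harct (by positivity)
          have h2 : (2 / Real.pi) * (Real.pi / 2 * (1 - t)) = 1 - t := by field_simp
          linarith [h2 ▸ h1]
        linarith [le_trans this hta]
    -- RHS set
    have hR : Set.Iic a ∩ Set.Icc (0:ℝ) 1 = Set.Icc 0 t := by
      ext y
      simp only [Set.mem_inter_iff, Set.mem_Iic, Set.mem_Icc]
      constructor
      · rintro ⟨hy, h0, h1⟩; exact ⟨h0, le_min hy h1⟩
      · rintro ⟨h0, h1⟩; exact ⟨le_trans h1 hta, h0, le_trans h1 ht2⟩
    rw [hL, hR]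
    -- compute RHS lintegral
    have hsplit : Set.Icc (0:ℝ) t = Set.Ico 0 (1 - x) ∪ Set.Icc (1 - x) t := by
      rw [Set.Ico_union_Icc_eq_Icc (by linarith) ht1]
    have hdisj : Disjoint (Set.Ico (0:ℝ) (1 - x)) (Set.Icc (1 - x) t) := by
      apply Set.disjoint_left.2
      rintro y ⟨-, hy2⟩ ⟨hy3, -⟩
      linarith
    rw [hsplit, lintegral_union measurableSet_Icc hdisj]
    have hzero : ∫⁻ y in Set.Ico (0:ℝ) (1 - x), ENNReal.ofReal (fdens x y) = 0 := by
      have hz : ∀ y ∈ Set.Ico (0:ℝ) (1 - x), ENNReal.ofReal (fdens x y) = (0:ENNReal) := by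
        rintro y ⟨-, hy2⟩
        have : ¬ (1 - x ≤ y) := by linarith
        simp [fdens, this]
      rw [setLIntegral_congr_fun measurableSet_Ico hz]
      simp
    rw [hzero, zero_add]
    have heq : ∫⁻ y in Set.Icc (1 - x) t, ENNReal.ofReal (fdens x y)
        = ∫⁻ y in Set.Icc (1 - x) t,
            ENNReal.ofReal (Real.pi / 2 * Real.sin (Real.pi * y / 2) / s) := by
      apply setLIntegral_congr_fun measurableSet_Icc
      rintro y ⟨hy1, -⟩
      simp [fdens, hy1, hs_def]
    rw [heq]
    have hintg : IntegrableOn (fun y => Real.pi / 2 * Real.sin (Real.pi * y / 2) / s)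
        (Set.Icc (1 - x) t) volume := by
      apply Continuous.integrableOn_Icc
      fun_prop
    have hnn : 0 ≤ᵐ[volume.restrict (Set.Icc (1 - x) t)]
        (fun y => Real.pi / 2 * Real.sin (Real.pi * y / 2) / s) := by
      rw [Filter.EventuallyLE, ae_restrict_iff' measurableSet_Icc]
      apply Filter.Eventually.of_forall
      rintro y ⟨hy1, hy2⟩
      have hsy : 0 ≤ Real.sin (Real.pi * y / 2) := by
        apply Real.sin_nonneg_of_nonneg_of_le_pi <;> nlinarith
      positivity
    rw [← ofReal_integral_eq_lintegral_ofReal hintg hnn]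
    have hval : ∫ y in Set.Icc (1 - x) t, Real.pi / 2 * Real.sin (Real.pi * y / 2) / s
        = 1 - c := by
      rw [MeasureTheory.integral_Icc_eq_integral_Ioc,
        ← intervalIntegral.integral_of_le ht1, integral_aux x (1 - x) t (ne_of_gt hs0)]
      rw [hcos1x, hc_def]
      field_simp
      rw [← hs_def, mul_div_cancel_left₀ _ hs0.ne']
    rw [hval, Real.volume_Icc]
end

section
/- The measure μ on [0,1] with density y ↦ 1 − cos(πy) is invariant for the Markov kernel with conditional density f_x: for every Borel set A ⊆ [0,1], ∫_0^1 (∫_A f_x(y) dy)·(1 − cos(πx)) dx = ∫_A (1 − cos(πy)) dy. (Here the inner integrand at x = 0 may be defined arbitrarily since the factor 1 − cos(πx) vanishes there.) -/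
open scoped Classical

open MeasureTheory

noncomputable def Fker (x y : ℝ) : ℝ :=
  if 1 - x ≤ y then Real.pi * Real.sin (Real.pi * y / 2) * Real.sin (Real.pi * x / 2) else 0

lemma one_sub_cos (x : ℝ) :
    1 - Real.cos (Real.pi * x) = 2 * Real.sin (Real.pi * x / 2) ^ 2 := by
  have h2 := Real.cos_two_mul' (Real.pi * x / 2)
  have h3 : 2 * (Real.pi * x / 2) = Real.pi * x := by ring
  rw [h3] at h2
  nlinarith [Real.sin_sq_add_cos_sq (Real.pi * x / 2)]

lemma fdens_mul (x y : ℝ) :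
    fdens x y * (1 - Real.cos (Real.pi * x)) = Fker x y := by
  unfold fdens Fker
  rw [one_sub_cos]
  by_cases h : 1 - x ≤ y <;> simp [h]
  by_cases hs : Real.sin (Real.pi * x / 2) = 0
  · simp [hs]
  · field_simp

lemma Fker_meas : Measurable (Function.uncurry Fker) := by
  unfold Fker Function.uncurry
  apply Measurable.ite
  · exact measurableSet_le (by fun_prop) (by fun_prop)
  · fun_prop
  · fun_prop

lemma inner_int (y : ℝ) (hy0 : 0 ≤ y) (hy1 : y ≤ 1) :
    (∫ x in Set.Icc (0:ℝ) 1, Fker x y) = 1 - Real.cos (Real.pi * y) := by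
  have h1 : ∀ x : ℝ, Fker x y =
      (Set.Ici (1 - y)).indicator
        (fun x => Real.pi * Real.sin (Real.pi * y / 2) * Real.sin (Real.pi * x / 2)) x := by
    intro x
    unfold Fker
    by_cases h : 1 - x ≤ y
    · rw [Set.indicator_of_mem (by simp [Set.mem_Ici]; linarith)]
      simp [h]
    · rw [Set.indicator_of_notMem (by simp [Set.mem_Ici]; linarith)]
      simp [h]
  simp only [h1]
  rw [MeasureTheory.setIntegral_indicator measurableSet_Ici]
  have h2 : Set.Icc (0:ℝ) 1 ∩ Set.Ici (1 - y) = Set.Icc (1 - y) 1 := by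
    ext t
    simp only [Set.mem_inter_iff, Set.mem_Icc, Set.mem_Ici]
    constructor
    · rintro ⟨⟨_, h2⟩, h3⟩; exact ⟨h3, h2⟩
    · rintro ⟨h2, h3⟩; exact ⟨⟨by linarith, h3⟩, h2⟩
  rw [h2, MeasureTheory.integral_Icc_eq_integral_Ioc,
    ← intervalIntegral.integral_of_le (by linarith)]
  rw [intervalIntegral.integral_const_mul]
  have hc : ∀ x : ℝ, Real.sin (Real.pi * x / 2) = Real.sin (Real.pi / 2 * x) := by
    intro x; ring_nf
  simp only [hc]
  rw [intervalIntegral.integral_comp_mul_left (fun x => Real.sin x)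
    (by positivity : Real.pi / 2 ≠ 0)]
  rw [integral_sin]
  have h3 : Real.pi / 2 * (1 - y) = Real.pi / 2 - Real.pi / 2 * y := by ring
  rw [h3, Real.cos_pi_div_two_sub]
  have h4 : Real.pi / 2 * 1 = Real.pi / 2 := by ring
  rw [h4, Real.cos_pi_div_two]
  rw [one_sub_cos]
  have hpi : Real.pi ≠ 0 := Real.pi_ne_zero
  have : Real.pi / 2 * y = Real.pi * y / 2 := by ring
  rw [this]
  field_simp
  ring_nf
  field_simp

/-- the measure with density `y ↦ 1 - cos(πy)` on `[0,1]` is invariant for the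
Markov kernel with conditional density `f_x`: for every Borel set `A ⊆ [0,1]`,
`∫_0^1 (∫_A f_x(y) dy)·(1 - cos(πx)) dx = ∫_A (1 - cos(πy)) dy`. -/
theorem stationary_measure_invariant (A : Set ℝ) (hA : MeasurableSet A)
    (hA' : A ⊆ Set.Icc (0 : ℝ) 1) :
    (∫ x in Set.Icc (0 : ℝ) 1, (∫ y in A, fdens x y) * (1 - Real.cos (Real.pi * x))) =
      ∫ y in A, (1 - Real.cos (Real.pi * y)) := by
  have hrw : (fun x => (∫ y in A, fdens x y) * (1 - Real.cos (Real.pi * x)))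
      = fun x => ∫ y in A, Fker x y := by
    funext x
    rw [← MeasureTheory.integral_mul_const]
    simp only [fdens_mul]
  calc (∫ x in Set.Icc (0 : ℝ) 1, (∫ y in A, fdens x y) * (1 - Real.cos (Real.pi * x)))
      = ∫ x in Set.Icc (0 : ℝ) 1, ∫ y in A, Fker x y := by rw [hrw]
    _ = ∫ y in A, ∫ x in Set.Icc (0 : ℝ) 1, Fker x y := by
        haveI : IsFiniteMeasure (volume.restrict A) := by
          constructor
          rw [Measure.restrict_apply_univ]
          exact lt_of_le_of_lt (measure_mono hA') (by simp)
        apply MeasureTheory.integral_integral_swap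
        refine MeasureTheory.Integrable.mono' (integrable_const Real.pi)
          Fker_meas.aestronglyMeasurable ?_
        filter_upwards with p
        unfold Function.uncurry Fker
        split
        · rw [Real.norm_eq_abs, abs_mul, abs_mul, abs_of_pos Real.pi_pos]
          rw [mul_assoc]
          exact mul_le_of_le_one_right Real.pi_pos.le
            (mul_le_one₀ (Real.abs_sin_le_one _) (abs_nonneg _) (Real.abs_sin_le_one _))
        · simp [Real.pi_pos.le]
    _ = ∫ y in A, (1 - Real.cos (Real.pi * y)) := by
        exact MeasureTheory.setIntegral_congr_fun hA fun y hy =>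
          inner_int y (hA' hy).1 (hA' hy).2
end

section
/- For all n ≥ 1, ∑_{k=1}^{n} (k+1)·E_{n,k} = E_{n+2}, where E_{n,k} are the Entringer numbers and E_{n+2} is the Euler number (the number of down-up alternating permutations of {1,…,n+2}). -/
open scoped Classical

/-- The Entringer number `E_{n,k}`: the number of down-up alternating permutations `τ` of
`{1,…,n+1}` with `τ(1) = k+1` (0-indexed: `τ 0 = k`); it vanishes for `k < 0`. -/
noncomputable def entringer (n : ℕ) (k : ℤ) : ℕ :=
  Nat.card {τ : Equiv.Perm (Fin (n + 1)) // DownUp τ ∧ ((τ ⟨0, Nat.succ_pos n⟩ : ℕ) : ℤ) = k}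

noncomputable def F (n : ℕ) (a : Fin (n+2)) (ρ : Equiv.Perm (Fin (n+1))) : Equiv.Perm (Fin (n+2)) :=
  (finSuccEquiv' 0).trans ((Equiv.optionCongr ρ).trans (finSuccEquiv' a).symm)

lemma F_zero (n : ℕ) (a : Fin (n+2)) (ρ : Equiv.Perm (Fin (n+1))) : F n a ρ 0 = a := by
  simp [F]

lemma F_succ (n : ℕ) (a : Fin (n+2)) (ρ : Equiv.Perm (Fin (n+1))) (j : Fin (n+1)) :
    F n a ρ j.succ = a.succAbove (ρ j) := by
  have h1 : (finSuccEquiv' (0 : Fin (n+2))) j.succ = some j := by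
    rw [← Fin.zero_succAbove j, finSuccEquiv'_succAbove]
  simp [F, Equiv.trans_apply, h1, finSuccEquiv'_symm_some]

lemma F_mk_succ (n : ℕ) (a : Fin (n+2)) (ρ : Equiv.Perm (Fin (n+1))) (j : ℕ) (h : j + 1 < n + 2) :
    F n a ρ ⟨j+1, h⟩ = a.succAbove (ρ ⟨j, by omega⟩) := by
  rw [← Fin.succ_mk, F_succ]

lemma key (n : ℕ) (a : Fin (n+2)) (ρ : Equiv.Perm (Fin (n+1))) :
    (UpDown ρ ∧ (ρ 0 : ℕ) < (a : ℕ)) ↔ DownUp (F n a ρ) := by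
  constructor
  · rintro ⟨hu, h0⟩ i h
    match i, h with
    | 0, h =>
      simp only [if_pos (Even.zero)]
      have : (⟨0, Nat.lt_of_succ_lt h⟩ : Fin (n+2)) = 0 := rfl
      rw [this, F_zero, F_mk_succ]
      rw [Fin.succAbove_lt_iff_castSucc_lt]
      exact Fin.lt_def.2 (by simpa using h0)
    | (j+1), h =>
      have hj : j + 1 < n + 1 := by omega
      have hu' := hu j hj
      rw [F_mk_succ, F_mk_succ]
      by_cases hje : Even j
      · rw [if_neg (by simp [Nat.even_add_one, hje])]
        rw [Fin.succAbove_lt_succAbove_iff]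
        simpa [if_pos hje] using hu'
      · rw [if_pos (by simp [Nat.even_add_one, hje])]
        rw [Fin.succAbove_lt_succAbove_iff]
        simpa [if_neg hje] using hu'
  · intro hd
    constructor
    · intro j hj
      have h := hd (j+1) (by omega)
      rw [F_mk_succ, F_mk_succ] at h
      by_cases hje : Even j
      · rw [if_pos hje]
        rw [if_neg (by simp [Nat.even_add_one, hje]), Fin.succAbove_lt_succAbove_iff] at h
        convert h using 3
      · rw [if_neg hje]
        rw [if_pos (by simp [Nat.even_add_one, hje]), Fin.succAbove_lt_succAbove_iff] at h
        convert h using 3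
    · have h := hd 0 (by omega)
      rw [if_pos Even.zero] at h
      have : (⟨0, by omega⟩ : Fin (n+2)) = 0 := rfl
      rw [this, F_zero, F_mk_succ] at h
      rw [Fin.succAbove_lt_iff_castSucc_lt] at h
      have := Fin.lt_def.1 h
      simpa using this

lemma F_bij (n : ℕ) :
    Function.Bijective (fun p : Fin (n+2) × Equiv.Perm (Fin (n+1)) => F n p.1 p.2) := by
  rw [Fintype.bijective_iff_injective_and_card]
  constructor
  · rintro ⟨a, ρ⟩ ⟨b, π⟩ h
    simp only at h
    have hab : a = b := by rw [← F_zero n a ρ, ← F_zero n b π, h]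
    subst hab
    have hρ : ρ = π := by
      ext j
      have := congrArg (fun σ : Equiv.Perm (Fin (n+2)) => σ j.succ) h
      simp only [F_succ] at this
      exact congrArg Fin.val (Fin.succAbove_right_injective this)
    simp [hρ]
  · simp [Fintype.card_perm, Nat.factorial_succ]

lemma updown_iff_downup_rev (m : ℕ) (ρ : Equiv.Perm (Fin m)) :
    UpDown ρ ↔ DownUp (ρ.trans Fin.revPerm) := by
  unfold UpDown DownUp
  apply forall_congr'; intro i
  apply forall_congr'; intro h
  simp only [Equiv.trans_apply, Fin.revPerm_apply]
  split <;> rw [Fin.rev_lt_rev]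

lemma card_fiber (n : ℕ) (ρ : Equiv.Perm (Fin (n+1))) :
    Fintype.card {a : Fin (n+2) // UpDown ρ ∧ (ρ 0 : ℕ) < (a : ℕ)} =
      if UpDown ρ then n + 1 - (ρ 0 : ℕ) else 0 := by
  by_cases h : UpDown ρ
  · rw [if_pos h, Fintype.card_subtype]
    have : (Finset.univ.filter (fun a : Fin (n+2) => UpDown ρ ∧ (ρ 0 : ℕ) < (a : ℕ)))
        = Finset.Ioi ((ρ 0).castSucc) := by
      ext a
      simp [h, Fin.lt_def]
    rw [this, Fin.card_Ioi]
    simp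
  · rw [if_neg h]
    exact Fintype.card_eq_zero_iff.2 ⟨fun a => h a.2.1⟩

lemma euler_eq (n : ℕ) : eulerNumber (n+2) =
    ∑ ρ ∈ Finset.univ.filter (fun ρ : Equiv.Perm (Fin (n+1)) => UpDown ρ), (n + 1 - (ρ 0 : ℕ)) := by
  have e1 : {σ : Equiv.Perm (Fin (n+2)) // DownUp σ} ≃
      {p : Fin (n+2) × Equiv.Perm (Fin (n+1)) // UpDown p.2 ∧ ((p.2 0 : ℕ) < (p.1 : ℕ))} :=
    (Equiv.subtypeEquiv (Equiv.ofBijective _ (F_bij n)) (fun p => key n p.1 p.2)).symm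
  have e2 : {p : Fin (n+2) × Equiv.Perm (Fin (n+1)) // UpDown p.2 ∧ ((p.2 0 : ℕ) < (p.1 : ℕ))} ≃
      {p : Equiv.Perm (Fin (n+1)) × Fin (n+2) // UpDown p.1 ∧ ((p.1 0 : ℕ) < (p.2 : ℕ))} :=
    (Equiv.prodComm _ _).subtypeEquiv (fun p => Iff.rfl)
  have e3 := Equiv.subtypeProdEquivSigmaSubtype
    (fun (ρ : Equiv.Perm (Fin (n+1))) (a : Fin (n+2)) => UpDown ρ ∧ ((ρ 0 : ℕ) < (a : ℕ)))
  rw [eulerNumber, Nat.card_congr (e1.trans (e2.trans e3)), Nat.card_eq_fintype_card,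
    Fintype.card_sigma]
  rw [Finset.sum_filter]
  congr 1
  ext ρ
  rw [card_fiber]

lemma trans_rev_rev {m : ℕ} (τ : Equiv.Perm (Fin m)) :
    (τ.trans Fin.revPerm).trans Fin.revPerm = τ :=
  Equiv.ext (fun x => Fin.rev_rev _)

lemma sum_rev (n : ℕ) :
    ∑ ρ ∈ Finset.univ.filter (fun ρ : Equiv.Perm (Fin (n+1)) => UpDown ρ), (n + 1 - (ρ 0 : ℕ)) =
    ∑ τ ∈ Finset.univ.filter (fun τ : Equiv.Perm (Fin (n+1)) => DownUp τ), ((τ 0 : ℕ) + 1) := by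
  apply Finset.sum_nbij' (fun ρ => ρ.trans Fin.revPerm) (fun τ => τ.trans Fin.revPerm)
  · intro ρ hρ
    simp only [Finset.mem_filter, Finset.mem_univ, true_and] at *
    exact (updown_iff_downup_rev _ ρ).1 hρ
  · intro τ hτ
    simp only [Finset.mem_filter, Finset.mem_univ, true_and] at *
    rw [updown_iff_downup_rev, trans_rev_rev]
    exact hτ
  · intro ρ _; exact trans_rev_rev ρ
  · intro τ _; exact trans_rev_rev τ
  · intro ρ _
    simp only [Equiv.trans_apply, Fin.revPerm_apply, Fin.val_rev]
    have := (ρ 0).isLt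
    omega

lemma entringer_eq_card (n : ℕ) (k : Fin (n+1)) :
    entringer n ((k : ℕ) : ℤ) =
      ((Finset.univ.filter (fun τ : Equiv.Perm (Fin (n+1)) => DownUp τ)).filter
        (fun τ => τ 0 = k)).card := by
  rw [entringer, Nat.card_eq_fintype_card, Fintype.card_subtype, Finset.filter_filter]
  congr 1
  ext τ
  have h0 : (⟨0, Nat.succ_pos n⟩ : Fin (n+1)) = 0 := rfl
  rw [h0]
  simp only [Finset.mem_filter, Finset.mem_univ, true_and]
  constructor
  · rintro ⟨hd, h⟩; exact ⟨hd, Fin.val_injective (by exact_mod_cast h)⟩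
  · rintro ⟨hd, h⟩; exact ⟨hd, by rw [h]⟩

lemma entringer_zero (n : ℕ) (hn : 1 ≤ n) : entringer n 0 = 0 := by
  rw [entringer]
  have : IsEmpty {τ : Equiv.Perm (Fin (n + 1)) // DownUp τ ∧
      ((τ ⟨0, Nat.succ_pos n⟩ : ℕ) : ℤ) = 0} := by
    constructor
    rintro ⟨τ, hd, h0⟩
    have h := hd 0 (by omega)
    rw [if_pos Even.zero] at h
    have : (τ ⟨0, Nat.succ_pos n⟩ : ℕ) = 0 := by exact_mod_cast h0
    have := Fin.lt_def.1 h
    omega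
  exact Nat.card_of_isEmpty

/-- for all `n ≥ 1`, `∑_{k=1}^n (k+1)·E_{n,k} = E_{n+2}`. -/
theorem entringer_weighted_sum (n : ℕ) (hn : 1 ≤ n) :
    ∑ k ∈ Finset.Icc 1 n, (k + 1) * entringer n (k : ℤ) = eulerNumber (n + 2) := by
  rw [euler_eq, sum_rev,
    ← Finset.sum_fiberwise (Finset.univ.filter (fun τ : Equiv.Perm (Fin (n+1)) => DownUp τ))
      (fun τ => τ 0) (fun τ => (τ 0 : ℕ) + 1)]
  have hinner : ∀ j : Fin (n+1),
      ∑ τ ∈ (Finset.univ.filter (fun τ : Equiv.Perm (Fin (n+1)) => DownUp τ)).filter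
        (fun τ => τ 0 = j), ((τ 0 : ℕ) + 1) = ((j : ℕ) + 1) * entringer n ((j : ℕ) : ℤ) := by
    intro j
    rw [entringer_eq_card]
    rw [Finset.sum_congr rfl (fun τ hτ => by
      rw [(Finset.mem_filter.1 hτ).2])]
    rw [Finset.sum_const, smul_eq_mul, mul_comm]
  rw [Finset.sum_congr rfl (fun j _ => hinner j)]
  rw [Fin.sum_univ_eq_sum_range (fun k => (k + 1) * entringer n (k : ℤ)) (n+1)]
  have hr : Finset.range (n+1) = insert 0 (Finset.Icc 1 n) := by
    ext x; simp; omega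
  rw [hr, Finset.sum_insert (by simp)]
  simp [entringer_zero n hn]
end

section
/- For every n ≥ 1, the sum of τ(1) over all down-up alternating permutations τ of {1,…,n} equals E_{n+1}; equivalently, the average of τ(1) over all down-up alternating permutations of {1,…,n} equals E_{n+1}/E_n. -/
open scoped Classical

namespace SumFirst

open Equiv Fin

def insPerm {n : ℕ} (s : Fin (n + 1)) (τ : Equiv.Perm (Fin n)) :
    Equiv.Perm (Fin (n + 1)) :=
  (finSuccEquiv n).trans ((Equiv.optionCongr τ).trans (finSuccEquiv' s).symm)

@[simp] lemma insPerm_zero {n : ℕ} (s : Fin (n + 1)) (τ : Equiv.Perm (Fin n)) :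
    insPerm s τ 0 = s := by
  simp [insPerm]

@[simp] lemma insPerm_succ {n : ℕ} (s : Fin (n + 1)) (τ : Equiv.Perm (Fin n)) (i : Fin n) :
    insPerm s τ i.succ = s.succAbove (τ i) := by
  simp [insPerm]

def remPerm {n : ℕ} (σ : Equiv.Perm (Fin (n + 1))) : Equiv.Perm (Fin n) :=
  Equiv.removeNone ((finSuccEquiv n).symm.trans (σ.trans (finSuccEquiv' (σ 0))))

lemma remPerm_insPerm {n : ℕ} (s : Fin (n + 1)) (τ : Equiv.Perm (Fin n)) :
    remPerm (insPerm s τ) = τ := by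
  apply Equiv.ext; intro i
  have he : ((finSuccEquiv n).symm.trans
      ((insPerm s τ).trans (finSuccEquiv' (insPerm s τ 0)))) (some i) = some (τ i) := by
    simp
  have h2 := Equiv.removeNone_some _ ⟨τ i, he⟩
  rw [he] at h2
  exact Option.some_injective _ h2

lemma insPerm_remPerm {n : ℕ} (σ : Equiv.Perm (Fin (n + 1))) :
    insPerm (σ 0) (remPerm σ) = σ := by
  apply Equiv.ext; intro x
  induction x using Fin.cases with
  | zero => simp
  | succ i =>
    have hne : σ i.succ ≠ σ 0 := by
      simp [Fin.succ_ne_zero]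
    obtain ⟨z, hz⟩ := Fin.exists_succAbove_eq hne
    have he : ((finSuccEquiv n).symm.trans (σ.trans (finSuccEquiv' (σ 0)))) (some i)
        = some z := by
      simp [← hz]
    have h2 := Equiv.removeNone_some _ ⟨z, he⟩
    rw [he] at h2
    have h3 : remPerm σ i = z := Option.some_injective _ h2
    simp [h3, hz]


lemma downUp_rev_iff {m : ℕ} (τ : Equiv.Perm (Fin m)) :
    DownUp (Fin.revPerm * τ) ↔ UpDown τ := by
  unfold DownUp UpDown
  refine forall_congr' fun i => forall_congr' fun h => ?_
  by_cases hi : Even i <;>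
    simp [hi, Equiv.Perm.mul_apply, Fin.rev_lt_rev]

lemma upDown_rev_iff {m : ℕ} (τ : Equiv.Perm (Fin m)) :
    UpDown (Fin.revPerm * τ) ↔ DownUp τ := by
  unfold DownUp UpDown
  refine forall_congr' fun i => forall_congr' fun h => ?_
  by_cases hi : Even i <;>
    simp [hi, Equiv.Perm.mul_apply, Fin.rev_lt_rev]

lemma insPerm_mk_succ {n : ℕ} (s : Fin (n + 1)) (τ : Equiv.Perm (Fin n)) (i : ℕ)
    (h : i + 1 < n + 1) :
    insPerm s τ ⟨i + 1, h⟩ = s.succAbove (τ ⟨i, Nat.lt_of_succ_lt_succ h⟩) :=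
  insPerm_succ s τ ⟨i, Nat.lt_of_succ_lt_succ h⟩

lemma insPerm_mk_zero {n : ℕ} (s : Fin (n + 1)) (τ : Equiv.Perm (Fin n)) (h : 0 < n + 1) :
    insPerm s τ ⟨0, h⟩ = s := by
  rw [Fin.mk_zero, insPerm_zero]

lemma downUp_insPerm_iff {n : ℕ} (hn : 0 < n) (s : Fin (n + 1)) (τ : Equiv.Perm (Fin n)) :
    DownUp (insPerm s τ) ↔ Fin.castSucc (τ ⟨0, hn⟩) < s ∧ UpDown τ := by
  constructor
  · intro hσ
    refine ⟨?_, ?_⟩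
    · have h1 := hσ 0 (by omega)
      rw [if_pos Even.zero, insPerm_mk_succ, insPerm_mk_zero] at h1
      exact (Fin.succAbove_lt_iff_castSucc_lt s _).mp h1
    · intro i h
      have h2 := hσ (i + 1) (by omega)
      rw [insPerm_mk_succ, insPerm_mk_succ] at h2
      rcases Nat.even_or_odd i with he | ho
      · rw [if_neg (by simp [Nat.even_add_one, he])] at h2
        rw [if_pos he]
        exact Fin.succAbove_lt_succAbove_iff.mp h2
      · rw [if_pos (by simp [Nat.even_add_one, Nat.not_even_iff_odd.mpr ho])] at h2
        rw [if_neg (Nat.not_even_iff_odd.mpr ho)]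
        exact Fin.succAbove_lt_succAbove_iff.mp h2
  · rintro ⟨h1, h2⟩ i h
    match i with
    | 0 =>
      rw [if_pos Even.zero, insPerm_mk_succ, insPerm_mk_zero]
      exact (Fin.succAbove_lt_iff_castSucc_lt s _).mpr h1
    | (j + 1) =>
      have hj : j + 1 < n := Nat.lt_of_succ_lt_succ h
      have h3 := h2 j hj
      rw [insPerm_mk_succ, insPerm_mk_succ]
      rcases Nat.even_or_odd j with he | ho
      · rw [if_pos he] at h3
        rw [if_neg (by simp [Nat.even_add_one, he])]
        exact Fin.succAbove_lt_succAbove_iff.mpr h3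
      · rw [if_neg (Nat.not_even_iff_odd.mpr ho)] at h3
        rw [if_pos (by simp [Nat.even_add_one, Nat.not_even_iff_odd.mpr ho])]
        exact Fin.succAbove_lt_succAbove_iff.mpr h3

end SumFirst

/-- for `n ≥ 1`, the sum of `τ(1)` over all down-up alternating permutations
of `{1,…,n}` equals `E_{n+1}` (so the average is `E_{n+1}/E_n`). -/
theorem sum_first_entry_downup (n : ℕ) (hn : 1 ≤ n) :
    ∑ τ ∈ Finset.univ.filter (fun τ : Equiv.Perm (Fin n) => DownUp τ),
        ((τ ⟨0, hn⟩ : ℕ) + 1) = eulerNumber (n + 1) := by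
  classical
  have hrev2 : ∀ {m : ℕ} (τ : Equiv.Perm (Fin m)), Fin.revPerm * (Fin.revPerm * τ) = τ := by
    intro m τ
    apply Equiv.ext; intro x
    simp [Equiv.Perm.mul_apply]
  have hE : eulerNumber (n + 1)
      = (Finset.univ.filter (fun σ : Equiv.Perm (Fin (n + 1)) => DownUp σ)).card := by
    rw [eulerNumber, Nat.card_eq_fintype_card, Fintype.card_subtype]
  rw [hE]
  have hmem : ∀ σ ∈ Finset.univ.filter (fun σ : Equiv.Perm (Fin (n + 1)) => DownUp σ),
      Fin.revPerm * SumFirst.remPerm σ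
        ∈ Finset.univ.filter (fun τ : Equiv.Perm (Fin n) => DownUp τ) := by
    intro σ hσ
    rw [Finset.mem_filter] at hσ ⊢
    refine ⟨Finset.mem_univ _, ?_⟩
    have h1 : DownUp (SumFirst.insPerm (σ 0) (SumFirst.remPerm σ)) := by
      rw [SumFirst.insPerm_remPerm]; exact hσ.2
    rw [SumFirst.downUp_insPerm_iff hn] at h1
    exact (SumFirst.downUp_rev_iff _).mpr h1.2
  rw [Finset.card_eq_sum_card_fiberwise hmem]
  refine Finset.sum_congr rfl fun τ hτ => ?_
  rw [Finset.mem_filter] at hτ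
  have hDUτ : DownUp τ := hτ.2
  set t : ℕ := (τ ⟨0, hn⟩ : ℕ) with ht
  have htn : t < n := (τ ⟨0, hn⟩).isLt
  set τ' : Equiv.Perm (Fin n) := Fin.revPerm * τ with hτ'
  have hτ'0 : ((τ' ⟨0, hn⟩ : Fin n) : ℕ) = n - (t + 1) := by
    rw [hτ']
    simp [Equiv.Perm.mul_apply, Fin.val_rev, ht]
  have hUD : UpDown τ' := (SumFirst.upDown_rev_iff τ).mpr hDUτ
  have key : (Finset.filter (fun σ => Fin.revPerm * SumFirst.remPerm σ = τ)
        (Finset.univ.filter (fun σ : Equiv.Perm (Fin (n + 1)) => DownUp σ))).card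
      = (Finset.Ioc (n - (t + 1)) n).card := by
    refine Finset.card_bij' (fun σ _ => ((σ 0 : Fin (n + 1)) : ℕ))
      (fun m hm => SumFirst.insPerm
        ⟨m, Nat.lt_succ_of_le (Finset.mem_Ioc.mp hm).2⟩ τ') ?_ ?_ ?_ ?_
    · intro σ hσ
      rw [Finset.mem_filter, Finset.mem_filter] at hσ
      obtain ⟨⟨-, hDU⟩, hf⟩ := hσ
      have hrem : SumFirst.remPerm σ = τ' := by
        rw [hτ', ← hf, hrev2]
      have h1 : DownUp (SumFirst.insPerm (σ 0) (SumFirst.remPerm σ)) := by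
        rw [SumFirst.insPerm_remPerm]; exact hDU
      rw [SumFirst.downUp_insPerm_iff hn] at h1
      have h2 : ((τ' ⟨0, hn⟩ : Fin n) : ℕ) < ((σ 0 : Fin (n + 1)) : ℕ) := by
        have := h1.1
        rw [hrem] at this
        simpa [Fin.lt_iff_val_lt_val] using this
      rw [Finset.mem_Ioc]
      exact ⟨by omega, Fin.is_le _⟩
    · intro m hm
      rw [Finset.mem_Ioc] at hm
      rw [Finset.mem_filter, Finset.mem_filter]
      have hDU' : DownUp (SumFirst.insPerm ⟨m, Nat.lt_succ_of_le hm.2⟩ τ') := by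
        rw [SumFirst.downUp_insPerm_iff hn]
        refine ⟨?_, hUD⟩
        rw [Fin.lt_iff_val_lt_val]
        simpa [hτ'0] using hm.1
      refine ⟨⟨Finset.mem_univ _, hDU'⟩, ?_⟩
      rw [SumFirst.remPerm_insPerm, hτ', hrev2]
    · intro σ hσ
      rw [Finset.mem_filter, Finset.mem_filter] at hσ
      obtain ⟨⟨-, hDU⟩, hf⟩ := hσ
      have hrem : SumFirst.remPerm σ = τ' := by
        rw [hτ', ← hf, hrev2]
      simp only [Fin.eta]
      rw [← hrem, SumFirst.insPerm_remPerm]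
    · intro m hm
      simp [SumFirst.insPerm_zero]
  rw [key, Nat.card_Ioc]
  omega
end

section
/- For all 1 ≤ i ≤ n, ∑_{k=1}^{n} k·Ê_{n−1, k−1}(i) = e(Z_{n,i}), where Ê_{n−1,k−1}(i) are the generalized Entringer numbers and e(Z_{n,i}) is the number of linear extensions of the augmented zigzag poset Z_{n,i}. -/
open scoped Classical

/-- The generating (cover) relations of the augmented zigzag poset `Z_{n,i}` on `{0,…,n}`:
`0 ⪯ i`; for `1 ≤ j < i`, `j ⪯ j+1` iff `i - j` is odd; for `i ≤ j < n`, `j ⪯ j+1` iff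
`j - i` is odd. -/
def ZRel (n i : ℕ) (x y : ℕ) : Prop :=
  (x = 0 ∧ y = i) ∨
  (y = x + 1 ∧ 1 ≤ x ∧ x < i ∧ Odd (i - x)) ∨
  (y = x + 1 ∧ i ≤ x ∧ x < n ∧ Odd (x - i)) ∨
  (x = y + 1 ∧ 1 ≤ y ∧ y < i ∧ Even (i - y)) ∨
  (x = y + 1 ∧ i ≤ y ∧ y < n ∧ Even (y - i))

/-- A linear extension of `Z_{n,i}`: a bijection `σ : {0,…,n} → {0,…,n}` with `σ(a) < σ(b)`
whenever `a ≺ b` in `Z_{n,i}` (equivalently, on the generating relations). -/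
def IsLinExtZ (n i : ℕ) (σ : Equiv.Perm (Fin (n + 1))) : Prop :=
  ∀ a b : Fin (n + 1), ZRel n i (a : ℕ) (b : ℕ) → σ a < σ b

/-- `e(Z_{n,i})`, the number of linear extensions of the augmented zigzag poset. -/
noncomputable def eZ (n i : ℕ) : ℕ :=
  Nat.card {σ : Equiv.Perm (Fin (n + 1)) // IsLinExtZ n i σ}

/-- The generalized Entringer number `Ê_{n,k}(i)`: for `1 ≤ i ≤ n+1`, the number of down-up
(if `i` odd) resp. up-down (if `i` even) alternating permutations `τ` of `{1,…,n+1}` with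
`τ(i) = k+1`. -/
noncomputable def gentringer (n k i : ℕ) : ℕ :=
  if h : 1 ≤ i ∧ i ≤ n + 1 then
    if Odd i then
      Nat.card {τ : Equiv.Perm (Fin (n + 1)) // DownUp τ ∧ (τ ⟨i - 1, by omega⟩ : ℕ) = k}
    else
      Nat.card {τ : Equiv.Perm (Fin (n + 1)) // UpDown τ ∧ (τ ⟨i - 1, by omega⟩ : ℕ) = k}
  else 0

set_option maxHeartbeats 1000000

/-- combined alternating condition: ascent at `j` iff `j+i` even. -/
def AltI (i : ℕ) {m : ℕ} (τ : Equiv.Perm (Fin m)) : Prop :=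
  ∀ j : ℕ, ∀ h : j + 1 < m,
    (τ ⟨j, Nat.lt_of_succ_lt h⟩ < τ ⟨j + 1, h⟩ ↔ Even (j + i))

lemma fin_ne_succ {m : ℕ} (τ : Equiv.Perm (Fin m)) (j : ℕ) (h : j + 1 < m) :
    τ ⟨j, Nat.lt_of_succ_lt h⟩ ≠ τ ⟨j + 1, h⟩ := by
  simp only [ne_eq, EmbeddingLike.apply_eq_iff_eq, Fin.mk.injEq]
  omega

lemma altI_iff_downUp {m : ℕ} {i : ℕ} (hi : Odd i) (τ : Equiv.Perm (Fin m)) :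
    AltI i τ ↔ DownUp τ := by
  constructor
  · intro H j h
    have := H j h
    split_ifs with hj
    · have : ¬ Even (j + i) := by
        rw [Nat.even_iff] at hj ⊢; rw [Nat.odd_iff] at hi; omega
      have hne := fin_ne_succ τ j h
      have := (H j h).not.mpr this
      exact lt_of_le_of_ne (not_lt.mp this) (Ne.symm hne)
    · exact (H j h).mpr (by rw [Nat.even_iff]; rw [Nat.even_iff] at hj; rw [Nat.odd_iff] at hi; omega)
  · intro H j h
    have := H j h
    split_ifs at this with hj
    · constructor
      · intro hl; exact absurd hl (not_lt.mpr (le_of_lt this))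
      · intro he; exfalso
        rw [Nat.even_iff] at he hj; rw [Nat.odd_iff] at hi; omega
    · constructor
      · intro _; rw [Nat.even_iff]; rw [Nat.even_iff] at hj; rw [Nat.odd_iff] at hi; omega
      · intro _; exact this

lemma altI_iff_upDown {m : ℕ} {i : ℕ} (hi : ¬ Odd i) (τ : Equiv.Perm (Fin m)) :
    AltI i τ ↔ UpDown τ := by
  rw [Nat.not_odd_iff_even] at hi
  constructor
  · intro H j h
    split_ifs with hj
    · exact (H j h).mpr (by rw [Nat.even_iff] at hj hi ⊢; omega)
    · have : ¬ Even (j + i) := by rw [Nat.even_iff] at hj hi ⊢; omega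
      have hne := fin_ne_succ τ j h
      have := (H j h).not.mpr this
      exact lt_of_le_of_ne (not_lt.mp this) (Ne.symm hne)
  · intro H j h
    have := H j h
    split_ifs at this with hj
    · constructor
      · intro _; rw [Nat.even_iff] at hj hi ⊢; omega
      · intro _; exact this
    · constructor
      · intro hl; exact absurd hl (not_lt.mpr (le_of_lt this))
      · intro he; exfalso; rw [Nat.even_iff] at he hj hi; omega

noncomputable section

/-- build a permutation of `{0,…,n}` from the image `s` of `0` and a permutation of the rest. -/
def phiFun {m : ℕ} (q : Fin (m + 2) × Equiv.Perm (Fin (m + 1))) : Equiv.Perm (Fin (m + 2)) :=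
  (finSuccEquiv (m + 1)).trans ((Equiv.optionCongr q.2).trans (finSuccEquiv' q.1).symm)

lemma phiFun_zero {m : ℕ} (s : Fin (m + 2)) (τ : Equiv.Perm (Fin (m + 1))) :
    phiFun (s, τ) 0 = s := by
  simp [phiFun]

lemma phiFun_succ {m : ℕ} (s : Fin (m + 2)) (τ : Equiv.Perm (Fin (m + 1)))
    (j : Fin (m + 1)) : phiFun (s, τ) j.succ = s.succAbove (τ j) := by
  simp [phiFun]

lemma phiFun_mk {m : ℕ} (s : Fin (m + 2)) (τ : Equiv.Perm (Fin (m + 1)))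
    (x : ℕ) (hx : x < m + 1) (h2 : x + 1 < m + 2) :
    phiFun (s, τ) ⟨x + 1, h2⟩ = s.succAbove (τ ⟨x, hx⟩) := by
  have : (⟨x + 1, h2⟩ : Fin (m + 2)) = (⟨x, hx⟩ : Fin (m + 1)).succ := rfl
  rw [this, phiFun_succ]

lemma phiFun_bijective {m : ℕ} : Function.Bijective (phiFun (m := m)) := by
  constructor
  · rintro ⟨s, τ⟩ ⟨s', τ'⟩ h
    have h0 : s = s' := by
      have := congrArg (fun σ : Equiv.Perm (Fin (m+2)) => σ 0) h
      simpa [phiFun_zero] using this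
    subst h0
    have hτ : τ = τ' := by
      apply Equiv.ext; intro j
      have := congrArg (fun σ : Equiv.Perm (Fin (m+2)) => σ j.succ) h
      simp only [phiFun_succ] at this
      exact Fin.succAbove_right_injective this
    rw [hτ]
  · intro σ
    set s := σ 0 with hs
    set e : Option (Fin (m+1)) ≃ Option (Fin (m+1)) :=
      (finSuccEquiv (m + 1)).symm.trans (σ.trans (finSuccEquiv' s)) with he
    have hnone : ∀ j : Fin (m+1), e (some j) ≠ none := by
      intro j hj
      have : (finSuccEquiv' s) (σ j.succ) = none := by
        simpa [he, e] using hj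
      have h2 : σ j.succ = s := by
        have := congrArg (finSuccEquiv' s).symm this
        simpa using this
      have : j.succ = (0 : Fin (m+2)) := σ.injective (by rw [h2, hs])
      exact (Fin.succ_ne_zero j) this
    refine ⟨(s, Equiv.removeNone e), ?_⟩
    apply Equiv.ext; intro x
    induction x using Fin.cases with
    | zero => rw [phiFun_zero]
    | succ j =>
      rw [phiFun_succ]
      have hex : ∃ x', e (some j) = some x' := by
        rcases Option.ne_none_iff_exists'.mp (hnone j) with ⟨x', hx'⟩
        exact ⟨x', hx'⟩
      have := Equiv.removeNone_some e hex
      have h2 : e (some j) = (finSuccEquiv' s) (σ j.succ) := by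
        simp [he, e]
      rw [h2] at this
      have := congrArg (finSuccEquiv' s).symm this
      simpa using this

def Phi {m : ℕ} : (Fin (m + 2) × Equiv.Perm (Fin (m + 1))) ≃ Equiv.Perm (Fin (m + 2)) :=
  Equiv.ofBijective phiFun phiFun_bijective

lemma Phi_apply {m : ℕ} (q : Fin (m + 2) × Equiv.Perm (Fin (m + 1))) :
    Phi q = phiFun q := rfl

lemma lt_succAbove_iff' {m : ℕ} (s : Fin (m + 2)) (j : Fin (m + 1)) :
    (s : ℕ) < (s.succAbove j : ℕ) ↔ (s : ℕ) ≤ (j : ℕ) := by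
  rcases lt_or_ge (j.castSucc) s with h | h
  · rw [Fin.succAbove_of_castSucc_lt _ _ h]
    simp only [Fin.coe_castSucc]
    have : (j : ℕ) < (s : ℕ) := h
    omega
  · rw [Fin.succAbove_of_le_castSucc _ _ h]
    simp only [Fin.val_succ]
    have : (s : ℕ) ≤ (j : ℕ) := h
    omega

end

lemma phiFun_lt_phiFun_iff {m : ℕ} (s : Fin (m + 2)) (τ : Equiv.Perm (Fin (m + 1)))
    (x y : ℕ) (hx : x < m + 1) (hy : y < m + 1) (hx2 : x + 1 < m + 2) (hy2 : y + 1 < m + 2) :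
    phiFun (s, τ) ⟨x + 1, hx2⟩ < phiFun (s, τ) ⟨y + 1, hy2⟩ ↔ τ ⟨x, hx⟩ < τ ⟨y, hy⟩ := by
  rw [phiFun_mk s τ x hx hx2, phiFun_mk s τ y hy hy2]
  exact Fin.succAbove_lt_succAbove_iff

lemma phiFun_zero_lt_iff {m : ℕ} (s : Fin (m + 2)) (τ : Equiv.Perm (Fin (m + 1)))
    (x : ℕ) (hx : x < m + 1) (hx2 : x + 1 < m + 2) (h0 : 0 < m + 2) :
    phiFun (s, τ) ⟨0, h0⟩ < phiFun (s, τ) ⟨x + 1, hx2⟩ ↔ (s : ℕ) ≤ (τ ⟨x, hx⟩ : ℕ) := by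
  rw [show (⟨0, h0⟩ : Fin (m + 2)) = 0 from rfl, phiFun_zero, phiFun_mk s τ x hx hx2,
    Fin.lt_def]
  exact lt_succAbove_iff' s _

lemma AltI.asc {m i : ℕ} {τ : Equiv.Perm (Fin (m + 1))} (hA : AltI i τ)
    (x y : ℕ) (hx : x < m + 1) (hy : y < m + 1) (hxy : y = x + 1)
    (hp : Even (x + i)) : τ ⟨x, hx⟩ < τ ⟨y, hy⟩ := by
  subst hxy
  exact (hA x hy).mpr hp

lemma AltI.desc {m i : ℕ} {τ : Equiv.Perm (Fin (m + 1))} (hA : AltI i τ)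
    (x y : ℕ) (hx : x < m + 1) (hy : y < m + 1) (hxy : y = x + 1)
    (hp : ¬ Even (x + i)) : τ ⟨y, hy⟩ < τ ⟨x, hx⟩ := by
  subst hxy
  have hnl := (hA x hy).not.mpr hp
  exact lt_of_le_of_ne (not_lt.mp hnl) (Ne.symm (fin_ne_succ τ x hy))

lemma key_iff {m i : ℕ} (hi1 : 1 ≤ i) (hin : i ≤ m + 1)
    (s : Fin (m + 2)) (τ : Equiv.Perm (Fin (m + 1))) :
    IsLinExtZ (m + 1) i (phiFun (s, τ)) ↔
      AltI i τ ∧ (s : ℕ) ≤ (τ ⟨i - 1, by omega⟩ : ℕ) := by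
  constructor
  · intro H
    constructor
    · intro j h
      by_cases hp : Even (j + i)
      · simp only [hp, iff_true]
        have hz : ZRel (m + 1) i (j + 1) (j + 2) := by
          rcases lt_or_ge (j + 1) i with hx | hx
          · refine Or.inr (Or.inl ⟨rfl, by omega, hx, ?_⟩)
            rw [Nat.odd_iff]; rw [Nat.even_iff] at hp; omega
          · refine Or.inr (Or.inr (Or.inl ⟨rfl, hx, by omega, ?_⟩))
            rw [Nat.odd_iff]; rw [Nat.even_iff] at hp; omega
        have hlt := H ⟨j + 1, by omega⟩ ⟨j + 2, by omega⟩ hz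
        exact (phiFun_lt_phiFun_iff s τ j (j + 1) (by omega) h (by omega) (by omega)).mp hlt
      · simp only [hp, iff_false]
        have hz : ZRel (m + 1) i (j + 2) (j + 1) := by
          rcases lt_or_ge (j + 1) i with hx | hx
          · refine Or.inr (Or.inr (Or.inr (Or.inl ⟨rfl, by omega, hx, ?_⟩)))
            rw [Nat.even_iff]; rw [Nat.even_iff] at hp; omega
          · refine Or.inr (Or.inr (Or.inr (Or.inr ⟨rfl, hx, by omega, ?_⟩)))
            rw [Nat.even_iff]; rw [Nat.even_iff] at hp; omega
        have hlt := H ⟨j + 2, by omega⟩ ⟨j + 1, by omega⟩ hz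
        have h5 := (phiFun_lt_phiFun_iff s τ (j + 1) j h (by omega) (by omega) (by omega)).mp hlt
        exact not_lt.mpr (le_of_lt h5)
    · have hz : ZRel (m + 1) i 0 i := Or.inl ⟨rfl, rfl⟩
      have hlt := H ⟨0, by omega⟩ ⟨i, by omega⟩ hz
      have hi' : (⟨i, by omega⟩ : Fin (m + 2)) = ⟨(i - 1) + 1, by omega⟩ := by
        apply Fin.ext; simp; omega
      rw [hi'] at hlt
      exact (phiFun_zero_lt_iff s τ (i - 1) (by omega) (by omega) (by omega)).mp hlt
  · rintro ⟨hA, hs⟩ a b hz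
    rcases a with ⟨av, hav⟩
    rcases b with ⟨bv, hbv⟩
    have hz' : ZRel (m + 1) i av bv := hz
    clear hz
    rcases hz' with ⟨ha, hb⟩ | ⟨hb, h1, h2, h3⟩ | ⟨hb, h1, h2, h3⟩ | ⟨hb, h1, h2, h3⟩ | ⟨hb, h1, h2, h3⟩
    · have ha2 : (⟨av, hav⟩ : Fin (m + 2)) = ⟨0, by omega⟩ := by
        apply Fin.ext; simp; omega
      have hb2 : (⟨bv, hbv⟩ : Fin (m + 2)) = ⟨(i - 1) + 1, by omega⟩ := by
        apply Fin.ext; simp; omega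
      rw [ha2, hb2]
      exact (phiFun_zero_lt_iff s τ (i - 1) (by omega) (by omega) (by omega)).mpr hs
    · subst hb
      have ha' : (⟨av, hav⟩ : Fin (m + 2)) = ⟨(av - 1) + 1, by omega⟩ := by
        apply Fin.ext; simp; omega
      rw [ha']
      refine (phiFun_lt_phiFun_iff s τ (av - 1) av (by omega) (by omega) (by omega) hbv).mpr ?_
      exact hA.asc (av - 1) av (by omega) (by omega) (by omega)
        (by rw [Nat.even_iff]; rw [Nat.odd_iff] at h3; omega)
    · subst hb
      have ha' : (⟨av, hav⟩ : Fin (m + 2)) = ⟨(av - 1) + 1, by omega⟩ := by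
        apply Fin.ext; simp; omega
      rw [ha']
      refine (phiFun_lt_phiFun_iff s τ (av - 1) av (by omega) (by omega) (by omega) hbv).mpr ?_
      exact hA.asc (av - 1) av (by omega) (by omega) (by omega)
        (by rw [Nat.even_iff]; rw [Nat.odd_iff] at h3; omega)
    · subst hb
      have hb' : (⟨bv, hbv⟩ : Fin (m + 2)) = ⟨(bv - 1) + 1, by omega⟩ := by
        apply Fin.ext; simp; omega
      rw [hb']
      refine (phiFun_lt_phiFun_iff s τ bv (bv - 1) (by omega) (by omega) hav (by omega)).mpr ?_
      exact hA.desc (bv - 1) bv (by omega) (by omega) (by omega)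
        (by rw [Nat.even_iff]; rw [Nat.even_iff] at h3; omega)
    · subst hb
      have hb' : (⟨bv, hbv⟩ : Fin (m + 2)) = ⟨(bv - 1) + 1, by omega⟩ := by
        apply Fin.ext; simp; omega
      rw [hb']
      refine (phiFun_lt_phiFun_iff s τ bv (bv - 1) (by omega) (by omega) hav (by omega)).mpr ?_
      exact hA.desc (bv - 1) bv (by omega) (by omega) (by omega)
        (by rw [Nat.even_iff]; rw [Nat.even_iff] at h3; omega)

lemma card_s_le {m : ℕ} (v : Fin (m + 1)) :
    (Finset.univ.filter (fun s : Fin (m + 2) => (s : ℕ) ≤ (v : ℕ))).card = (v : ℕ) + 1 := by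
  have : (Finset.univ.filter (fun s : Fin (m + 2) => (s : ℕ) ≤ (v : ℕ)))
      = Finset.Iic (⟨(v : ℕ), by omega⟩ : Fin (m + 2)) := by
    ext x
    simp [Fin.le_def]
  rw [this, Fin.card_Iic]

lemma count_eq {m i : ℕ} (hi1 : 1 ≤ i) (hin : i ≤ m + 1) :
    Nat.card {q : Fin (m + 2) × Equiv.Perm (Fin (m + 1)) //
        AltI i q.2 ∧ (q.1 : ℕ) ≤ (q.2 ⟨i - 1, by omega⟩ : ℕ)}
      = ∑ k ∈ Finset.Icc 1 (m + 1),
          k * Nat.card {τ : Equiv.Perm (Fin (m + 1)) //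
            AltI i τ ∧ (τ ⟨i - 1, by omega⟩ : ℕ) = k - 1} := by
  have hp : i - 1 < m + 1 := by omega
  set p : Fin (m + 1) := ⟨i - 1, hp⟩ with hpdef
  rw [Nat.card_eq_fintype_card, Fintype.card_subtype, Finset.card_filter,
    ← Finset.univ_product_univ, Finset.sum_product, Finset.sum_comm]
  have step1 : ∀ τ : Equiv.Perm (Fin (m + 1)),
      (∑ s : Fin (m + 2), if AltI i τ ∧ (s : ℕ) ≤ (τ p : ℕ) then 1 else 0)
        = if AltI i τ then ((τ p : ℕ) + 1) else 0 := by
    intro τ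
    by_cases hA : AltI i τ
    · simp only [hA, true_and, if_true]
      rw [← Finset.card_filter, card_s_le]
    · simp [hA]
  rw [Finset.sum_congr rfl (fun τ _ => step1 τ)]
  have step2 : ∀ τ : Equiv.Perm (Fin (m + 1)),
      (if AltI i τ then ((τ p : ℕ) + 1) else 0)
        = ∑ k ∈ Finset.Icc 1 (m + 1), if AltI i τ ∧ (τ p : ℕ) = k - 1 then k else 0 := by
    intro τ
    by_cases hA : AltI i τ
    · simp only [hA, true_and, if_true]
      have hcong : ∀ k ∈ Finset.Icc 1 (m + 1),
          (if (τ p : ℕ) = k - 1 then k else 0) = (if k = (τ p : ℕ) + 1 then k else 0) := by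
        intro k hk
        simp only [Finset.mem_Icc] at hk
        refine if_congr ?_ rfl rfl
        omega
      rw [Finset.sum_congr rfl hcong, Finset.sum_ite_eq' (Finset.Icc 1 (m + 1))]
      have hmem : (τ p : ℕ) + 1 ∈ Finset.Icc 1 (m + 1) := by
        simp only [Finset.mem_Icc]
        exact ⟨by omega, by have := (τ p).is_le; omega⟩
      rw [if_pos hmem]
    · simp [hA]
  rw [Finset.sum_congr rfl (fun τ _ => step2 τ), Finset.sum_comm]
  refine Finset.sum_congr rfl (fun k _ => ?_)
  rw [← Finset.sum_filter, Finset.sum_const, smul_eq_mul, mul_comm,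
    ← Fintype.card_subtype, ← Nat.card_eq_fintype_card]
lemma gentringer_eq {m i : ℕ} (hi1 : 1 ≤ i) (hin : i ≤ m + 1) (k : ℕ) :
    gentringer m k i
      = Nat.card {τ : Equiv.Perm (Fin (m + 1)) //
          AltI i τ ∧ (τ ⟨i - 1, by omega⟩ : ℕ) = k} := by
  rw [gentringer, dif_pos ⟨hi1, hin⟩]
  by_cases ho : Odd i
  · rw [if_pos ho]
    exact (Nat.card_congr (Equiv.subtypeEquivRight fun τ =>
      and_congr (altI_iff_downUp ho τ) Iff.rfl)).symm
  · rw [if_neg ho]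
    exact (Nat.card_congr (Equiv.subtypeEquivRight fun τ =>
      and_congr (altI_iff_upDown ho τ) Iff.rfl)).symm

/-- for `1 ≤ i ≤ n`, `∑_{k=1}^n k·Ê_{n-1,k-1}(i) = e(Z_{n,i})`. -/
theorem gentringer_weighted_sum (n i : ℕ) (hi1 : 1 ≤ i) (hin : i ≤ n) :
    ∑ k ∈ Finset.Icc 1 n, k * gentringer (n - 1) (k - 1) i = eZ n i := by
  obtain ⟨m, rfl⟩ : ∃ m, n = m + 1 := ⟨n - 1, by omega⟩
  have hin' : i ≤ m + 1 := hin
  rw [eZ]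
  have hcongr : Nat.card {σ : Equiv.Perm (Fin (m + 1 + 1)) // IsLinExtZ (m + 1) i σ}
      = Nat.card {q : Fin (m + 2) × Equiv.Perm (Fin (m + 1)) //
          AltI i q.2 ∧ (q.1 : ℕ) ≤ (q.2 ⟨i - 1, by omega⟩ : ℕ)} := by
    refine (Nat.card_congr (Equiv.subtypeEquiv Phi fun q => ?_)).symm
    obtain ⟨s, τ⟩ := q
    rw [Phi_apply]
    exact (key_iff hi1 hin' s τ).symm
  rw [hcongr, count_eq hi1 hin']
  simp only [Nat.add_sub_cancel]
  refine Finset.sum_congr rfl (fun k _ => ?_)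
  rw [gentringer_eq hi1 hin' (k - 1)]
end

section
/- Let 1 ≤ i ≤ n. If i is odd, then the sum of τ(i) over all down-up alternating permutations τ of {1,…,n} equals e(Z_{n,i}); if i is even, then the sum of τ(i) over all up-down alternating permutations τ of {1,…,n} equals e(Z_{n,i}). Equivalently, the average of τ(i) over down-up alternating permutations (i odd), respectively up-down alternating permutations (i even), of {1,…,n} equals e(Z_{n,i})/E_n. -/
open scoped Classical

/-- Insertion: `σ(0) = v`, `σ(j+1) = v.succAbove (τ j)`. -/
def insP (n : ℕ) (τ : Equiv.Perm (Fin n)) (v : Fin (n + 1)) : Equiv.Perm (Fin (n + 1)) :=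
  (finSuccEquiv' 0).trans ((Equiv.optionCongr τ).trans (finSuccEquiv' v).symm)

lemma insP_zero (n : ℕ) (τ : Equiv.Perm (Fin n)) (v : Fin (n + 1)) :
    insP n τ v 0 = v := by
  simp [insP, Equiv.trans_apply, finSuccEquiv'_at, finSuccEquiv'_symm_none]

lemma insP_succ (n : ℕ) (τ : Equiv.Perm (Fin n)) (v : Fin (n + 1)) (j : Fin n) :
    insP n τ v j.succ = v.succAbove (τ j) := by
  have h0 : finSuccEquiv' (0 : Fin (n + 1)) j.succ = some j := by
    rw [show (j.succ : Fin (n + 1)) = (0 : Fin (n + 1)).succAbove j by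
      rw [Fin.succAbove_zero]]
    exact finSuccEquiv'_succAbove 0 j
  simp [insP, Equiv.trans_apply, h0, finSuccEquiv'_symm_some]

lemma insP_injective (n : ℕ) :
    Function.Injective (fun p : Equiv.Perm (Fin n) × Fin (n + 1) => insP n p.1 p.2) := by
  rintro ⟨τ, v⟩ ⟨τ', v'⟩ h
  simp only at h
  have hv : v = v' := by
    rw [← insP_zero n τ v, ← insP_zero n τ' v', h]
  subst hv
  have hτ : τ = τ' := by
    ext j
    have := DFunLike.congr_fun h j.succ
    rw [insP_succ, insP_succ] at this
    have := Fin.succAbove_right_injective (p := v) this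
    exact congrArg Fin.val this
  simp [hτ]

lemma insP_surjective (n : ℕ) (σ : Equiv.Perm (Fin (n + 1))) :
    ∃ τ v, insP n τ v = σ := by
  set ψ : Option (Fin n) ≃ Option (Fin n) :=
    (finSuccEquiv' 0).symm.trans (σ.trans (finSuccEquiv' (σ 0))) with hψdef
  have hψ : ψ none = none := by
    simp [hψdef, Equiv.trans_apply, finSuccEquiv'_symm_none, finSuccEquiv'_at]
  refine ⟨ψ.removeNone, σ 0, ?_⟩
  have hoc : Equiv.optionCongr ψ.removeNone = ψ := by
    ext x
    cases x with
    | none => simp [hψ]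
    | some y =>
      rcases hy : ψ (some y) with _ | z
      · exact absurd (ψ.injective (hy.trans hψ.symm)) (by simp)
      · have h2 := Equiv.removeNone_some ψ ⟨z, hy⟩
        simp only [Equiv.optionCongr_apply, Option.map_some]
        rw [h2, hy]
  rw [insP, hoc, hψdef]
  ext x
  simp [Equiv.trans_apply, Equiv.symm_apply_apply]

/-- Unified alternation condition. -/
def AltC (n i : ℕ) (τ : Equiv.Perm (Fin n)) : Prop :=
  ∀ k : ℕ, ∀ h : k + 1 < n,
    if (i + k) % 2 = 0 then τ ⟨k, Nat.lt_of_succ_lt h⟩ < τ ⟨k + 1, h⟩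
    else τ ⟨k + 1, h⟩ < τ ⟨k, Nat.lt_of_succ_lt h⟩

lemma altC_iff_downUp {n i : ℕ} (hi : Odd i) (τ : Equiv.Perm (Fin n)) :
    AltC n i τ ↔ DownUp τ := by
  rw [Nat.odd_iff] at hi
  unfold AltC DownUp
  refine forall_congr' fun k => forall_congr' fun h => ?_
  rcases Nat.even_or_odd k with hk | hk
  · rw [Nat.even_iff] at hk
    rw [if_neg (by omega), if_pos (Nat.even_iff.mpr hk)]
  · rw [Nat.odd_iff] at hk
    rw [if_pos (by omega), if_neg (by rw [Nat.even_iff]; omega)]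

lemma altC_iff_upDown {n i : ℕ} (hi : Even i) (τ : Equiv.Perm (Fin n)) :
    AltC n i τ ↔ UpDown τ := by
  rw [Nat.even_iff] at hi
  unfold AltC UpDown
  refine forall_congr' fun k => forall_congr' fun h => ?_
  rcases Nat.even_or_odd k with hk | hk
  · rw [Nat.even_iff] at hk
    rw [if_pos (by omega), if_pos (Nat.even_iff.mpr hk)]
  · rw [Nat.odd_iff] at hk
    rw [if_neg (by omega), if_neg (by rw [Nat.even_iff]; omega)]

lemma isLinExtZ_insP_iff {n i : ℕ} (hi1 : 1 ≤ i) (hin : i ≤ n)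
    (τ : Equiv.Perm (Fin n)) (v : Fin (n + 1)) :
    IsLinExtZ n i (insP n τ v) ↔
      AltC n i τ ∧ (v : ℕ) ≤ (τ ⟨i - 1, Nat.sub_one_lt_of_le hi1 hin⟩ : ℕ) := by
  have hsucc : ∀ (m : ℕ) (hm : m < n) (a : Fin (n + 1)), (a : ℕ) = m + 1 →
      a = Fin.succ ⟨m, hm⟩ := by
    intro m hm a ha
    apply Fin.ext
    simp [ha]
  constructor
  · intro h
    constructor
    · -- AltC
      intro k hk
      have hk2 : k + 2 < n + 1 := by omega
      have hk1 : k + 1 < n + 1 := by omega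
      have ha : (⟨k + 1, hk1⟩ : Fin (n + 1)) = Fin.succ ⟨k, Nat.lt_of_succ_lt hk⟩ :=
        hsucc k _ _ rfl
      have hb : (⟨k + 2, hk2⟩ : Fin (n + 1)) = Fin.succ ⟨k + 1, hk⟩ :=
        hsucc (k + 1) _ _ rfl
      by_cases hp : (i + k) % 2 = 0
      · rw [if_pos hp]
        have hrel : ZRel n i (k + 1) (k + 2) := by
          rcases le_or_gt i (k + 1) with hc | hc
          · exact Or.inr (Or.inr (Or.inl ⟨rfl, hc, by omega, by rw [Nat.odd_iff]; omega⟩))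
          · exact Or.inr (Or.inl ⟨rfl, by omega, hc, by rw [Nat.odd_iff]; omega⟩)
        have := h ⟨k + 1, hk1⟩ ⟨k + 2, hk2⟩ hrel
        rw [ha, hb, insP_succ, insP_succ, Fin.succAbove_lt_succAbove_iff] at this
        exact this
      · rw [if_neg hp]
        have hrel : ZRel n i (k + 2) (k + 1) := by
          rcases le_or_gt i (k + 1) with hc | hc
          · exact Or.inr (Or.inr (Or.inr (Or.inr ⟨rfl, hc, by omega,
              by rw [Nat.even_iff]; omega⟩)))
          · exact Or.inr (Or.inr (Or.inr (Or.inl ⟨rfl, by omega, hc,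
              by rw [Nat.even_iff]; omega⟩)))
        have := h ⟨k + 2, hk2⟩ ⟨k + 1, hk1⟩ hrel
        rw [ha, hb, insP_succ, insP_succ, Fin.succAbove_lt_succAbove_iff] at this
        exact this
    · -- v ≤ τ (i-1)
      have hiN : i < n + 1 := by omega
      have hrel : ZRel n i ((0 : Fin (n + 1)) : ℕ) ((⟨i, hiN⟩ : Fin (n + 1)) : ℕ) :=
        Or.inl ⟨Fin.val_zero _, rfl⟩
      have := h 0 ⟨i, hiN⟩ hrel
      have hb : (⟨i, hiN⟩ : Fin (n + 1)) = Fin.succ ⟨i - 1, by omega⟩ :=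
        hsucc (i - 1) (by omega) _ (by simp; omega)
      rw [hb, insP_zero, insP_succ, Fin.lt_succAbove_iff_le_castSucc] at this
      simpa [Fin.le_def] using this
  · rintro ⟨hA, hv⟩ a b hrel
    have key : ∀ (p q : Fin (n + 1)) (x : ℕ), (p : ℕ) = x → (q : ℕ) = x + 1 →
        1 ≤ x → x < n →
        ((i + x) % 2 = 1 → insP n τ v p < insP n τ v q) ∧
        ((i + x) % 2 = 0 → insP n τ v q < insP n τ v p) := by
      intro p q x hp hq hx1 hxn
      have hx1n : x - 1 + 1 < n := by omega
      have hp' : p = Fin.succ ⟨x - 1, by omega⟩ := hsucc (x - 1) _ _ (by omega)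
      have hq' : q = Fin.succ ⟨x, hxn⟩ := hsucc x _ _ hq
      have hxeq : (⟨x - 1 + 1, hx1n⟩ : Fin n) = ⟨x, hxn⟩ := Fin.ext (by simp; omega)
      rw [hp', hq', insP_succ, insP_succ]
      constructor
      · intro hpar
        rw [Fin.succAbove_lt_succAbove_iff]
        have := hA (x - 1) hx1n
        rw [if_pos (by omega), hxeq] at this
        exact this
      · intro hpar
        rw [Fin.succAbove_lt_succAbove_iff]
        have := hA (x - 1) hx1n
        rw [if_neg (by omega), hxeq] at this
        exact this
    rcases hrel with ⟨ha, hb⟩ | ⟨hb, hx1, hxi, hodd⟩ | ⟨hb, hix, hxn, hodd⟩ |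
      ⟨ha, hy1, hyi, heven⟩ | ⟨ha, hiy, hyn, heven⟩
    · -- 0 ⪯ i
      have ha' : a = 0 := Fin.ext (by simp [ha])
      have hb' : b = Fin.succ ⟨i - 1, by omega⟩ := hsucc (i - 1) (by omega) _ (by omega)
      rw [ha', hb', insP_zero, insP_succ, Fin.lt_succAbove_iff_le_castSucc]
      simpa [Fin.le_def] using hv
    · rw [Nat.odd_iff] at hodd
      exact (key a b (a : ℕ) rfl hb hx1 (by omega)).1 (by omega)
    · rw [Nat.odd_iff] at hodd
      exact (key a b (a : ℕ) rfl hb (by omega) hxn).1 (by omega)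
    · rw [Nat.even_iff] at heven
      exact (key b a (b : ℕ) rfl ha hy1 (by omega)).2 (by omega)
    · rw [Nat.even_iff] at heven
      exact (key b a (b : ℕ) rfl ha (by omega) hyn).2 (by omega)

lemma card_fin_le (n c : ℕ) (hc : c < n + 1) :
    (Finset.univ.filter (fun v : Fin (n + 1) => (v : ℕ) ≤ c)).card = c + 1 := by
  rw [← Finset.card_range (c + 1)]
  refine Finset.card_bij' (fun v _ => (v : ℕ))
    (fun k hk => (⟨k, by simp only [Finset.mem_range] at hk; omega⟩ : Fin (n + 1)))
    ?_ ?_ ?_ ?_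
  · intro a ha
    simp only [Finset.mem_filter] at ha
    simp only [Finset.mem_range]; omega
  · intro k hk
    simp only [Finset.mem_range] at hk
    simp only [Finset.mem_filter, Finset.mem_univ, true_and]; omega
  · intro a _; exact Fin.ext rfl
  · intro k _; rfl

lemma eZ_eq_sum {n i : ℕ} (hi1 : 1 ≤ i) (hin : i ≤ n) :
    ∑ τ ∈ Finset.univ.filter (fun τ : Equiv.Perm (Fin n) => AltC n i τ),
        ((τ ⟨i - 1, Nat.sub_one_lt_of_le hi1 hin⟩ : ℕ) + 1) = eZ n i := by
  rw [eZ, Nat.card_eq_fintype_card, Fintype.card_subtype]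
  rw [Finset.sum_congr rfl (fun τ _ =>
    (card_fin_le n ((τ ⟨i - 1, by omega⟩ : ℕ)) (by omega)).symm)]
  rw [← Finset.card_sigma]
  apply Finset.card_bij (fun p _ => insP n p.1 p.2)
  · rintro ⟨τ, v⟩ hp
    simp only [Finset.mem_sigma, Finset.mem_filter, Finset.mem_univ, true_and] at hp
    simp only [Finset.mem_filter, Finset.mem_univ, true_and]
    exact (isLinExtZ_insP_iff hi1 hin τ v).mpr ⟨hp.1, hp.2⟩
  · rintro ⟨τ, v⟩ _ ⟨τ', v'⟩ _ h
    have h2 : (τ, v) = (τ', v') := insP_injective n h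
    injection h2 with h3 h4
    subst h3; subst h4; rfl
  · intro σ hσ
    simp only [Finset.mem_filter, Finset.mem_univ, true_and] at hσ
    obtain ⟨τ, v, h⟩ := insP_surjective n σ
    have := (isLinExtZ_insP_iff hi1 hin τ v).mp (h ▸ hσ)
    exact ⟨⟨τ, v⟩, by
      simp only [Finset.mem_sigma, Finset.mem_filter, Finset.mem_univ, true_and]
      exact ⟨this.1, this.2⟩, h⟩

/-- for `1 ≤ i ≤ n`, the sum of `τ(i)` over all down-up (if `i` odd), resp.
up-down (if `i` even), alternating permutations of `{1,…,n}` equals `e(Z_{n,i})` (so the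
corresponding average is `e(Z_{n,i})/E_n`). -/
theorem sum_ith_entry_eq_eZ (n i : ℕ) (hi1 : 1 ≤ i) (hin : i ≤ n) :
    (Odd i →
      ∑ τ ∈ Finset.univ.filter (fun τ : Equiv.Perm (Fin n) => DownUp τ),
          ((τ ⟨i - 1, by omega⟩ : ℕ) + 1) = eZ n i) ∧
    (Even i →
      ∑ τ ∈ Finset.univ.filter (fun τ : Equiv.Perm (Fin n) => UpDown τ),
          ((τ ⟨i - 1, by omega⟩ : ℕ) + 1) = eZ n i) := by
  constructor
  · intro hi
    rw [← eZ_eq_sum hi1 hin]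
    exact Finset.sum_congr (Finset.filter_congr fun τ _ =>
      (altC_iff_downUp hi τ).symm) (fun _ _ => rfl)
  · intro hi
    rw [← eZ_eq_sum hi1 hin]
    exact Finset.sum_congr (Finset.filter_congr fun τ _ =>
      (altC_iff_upDown hi τ).symm) (fun _ _ => rfl)
end

section
/- Let n ≥ 4 and 1 ≤ i ≤ n−3. The expected value of the i-th coordinate with respect to the uniform (normalized Lebesgue) measure on P_n(1) is (∫_{P_n(1)} x_i dλ)/λ(P_n(1)) = e(Z_{n−3,i})/((n−2)·E_{n−3}); equivalently, ∫_{P_n(1)} x_i dλ = e(Z_{n−3,i})/(n−2)!. -/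
open scoped Classical

open MeasureTheory

open scoped ENNReal

namespace Stmt18Aux

variable {k : ℕ}

def cube (k : ℕ) : Set (Fin k → ℝ) := {x | ∀ j, x j ∈ Set.Icc (0:ℝ) 1}

def cubeOrd (R : Fin k → Fin k → Prop) : Set (Fin k → ℝ) :=
  {x | x ∈ cube k ∧ ∀ a b, R a b → x a ≤ x b}

def chamber (σ : Equiv.Perm (Fin k)) : Set (Fin k → ℝ) :=
  {x | x ∈ cube k ∧ ∀ a b, σ a < σ b → x a < x b}

lemma measurableSet_imp {α : Type*} [MeasurableSpace α] (p : Prop) {s : Set α}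
    (hs : MeasurableSet s) : MeasurableSet {x | p → x ∈ s} := by
  by_cases hp : p
  · simpa [hp] using hs
  · simp [hp]

lemma measurableSet_cube : MeasurableSet (cube k) := by
  have : cube k = ⋂ j, (fun x : Fin k → ℝ => x j) ⁻¹' Set.Icc (0:ℝ) 1 := by
    ext x; simp [cube]
  rw [this]
  exact MeasurableSet.iInter fun j => (measurable_pi_apply j) measurableSet_Icc

lemma measurableSet_cubeOrd (R : Fin k → Fin k → Prop) : MeasurableSet (cubeOrd R) := by
  have : cubeOrd R = cube k ∩ ⋂ a, ⋂ b, {x : Fin k → ℝ | R a b → x ∈ {x : Fin k → ℝ | x a ≤ x b}} := by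
    ext x; simp [cubeOrd]
  rw [this]
  exact measurableSet_cube.inter <| MeasurableSet.iInter fun a => MeasurableSet.iInter fun b =>
    measurableSet_imp _ (measurableSet_le (measurable_pi_apply a) (measurable_pi_apply b))

lemma measurableSet_chamber (σ : Equiv.Perm (Fin k)) : MeasurableSet (chamber σ) := by
  have : chamber σ = cube k ∩ ⋂ a, ⋂ b, {x : Fin k → ℝ | σ a < σ b → x ∈ {x : Fin k → ℝ | x a < x b}} := by
    ext x; simp [chamber]
  rw [this]
  exact measurableSet_cube.inter <| MeasurableSet.iInter fun a => MeasurableSet.iInter fun b =>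
    measurableSet_imp _ (measurableSet_lt (measurable_pi_apply a) (measurable_pi_apply b))

lemma volume_chamber_eq (σ : Equiv.Perm (Fin k)) :
    volume (chamber σ) = volume (chamber (1 : Equiv.Perm (Fin k))) := by
  have hmp := MeasureTheory.volume_measurePreserving_piCongrLeft (fun _ : Fin k => ℝ) σ
  set e := MeasurableEquiv.piCongrLeft (fun _ : Fin k => ℝ) σ with he
  have happ : ∀ (x : Fin k → ℝ) (j : Fin k), e x j = x (σ.symm j) := by
    intro x j
    conv_lhs => rw [← σ.apply_symm_apply j]
    exact MeasurableEquiv.piCongrLeft_apply_apply (β := fun _ : Fin k => ℝ) σ x (σ.symm j)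
  have hpre : chamber σ = e ⁻¹' chamber (1 : Equiv.Perm (Fin k)) := by
    ext x
    simp only [Set.mem_preimage, chamber, Set.mem_setOf_eq, cube, Equiv.Perm.one_apply]
    constructor
    · rintro ⟨h1, h2⟩
      refine ⟨fun j => by rw [happ]; exact h1 _, fun a b hab => ?_⟩
      rw [happ, happ]
      exact h2 _ _ (by simpa using hab)
    · rintro ⟨h1, h2⟩
      refine ⟨fun j => by simpa [happ] using h1 (σ j), fun a b hab => ?_⟩
      have := h2 (σ a) (σ b) hab
      simpa [happ] using this
  rw [hpre]
  exact hmp.measure_preimage (measurableSet_chamber _).nullMeasurableSet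

lemma chamber_lt_iff {σ : Equiv.Perm (Fin k)} {x : Fin k → ℝ} (hx : x ∈ chamber σ)
    (a b : Fin k) : σ a < σ b ↔ x a < x b := by
  constructor
  · exact hx.2 a b
  · intro hab
    rcases lt_trichotomy (σ a) (σ b) with h | h | h
    · exact h
    · exact absurd (congrArg x (σ.injective (Fin.ext (by exact congrArg Fin.val h)))) (ne_of_lt hab)
    · exact absurd (hx.2 b a h) (not_lt.mpr hab.le)

lemma chamber_disjoint {σ τ : Equiv.Perm (Fin k)} (h : σ ≠ τ) :
    Disjoint (chamber σ) (chamber τ) := by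
  rw [Set.disjoint_left]
  intro x hσ hτ
  apply h
  have key : ∀ a b, σ a < σ b ↔ τ a < τ b :=
    fun a b => (chamber_lt_iff hσ a b).trans (chamber_lt_iff hτ a b).symm
  have hsm : StrictMono (fun u => τ (σ.symm u)) := by
    intro u v huv
    exact (key _ _).mp (by simpa using huv)
  have hrange : Set.range (fun u => τ (σ.symm u)) = Set.range (id : Fin k → Fin k) := by
    rw [Set.range_id, Set.range_eq_univ]
    exact τ.surjective.comp σ.symm.surjective
  haveI : WellFoundedLT (Fin k) := Finite.to_wellFoundedLT
  have hid : (fun u => τ (σ.symm u)) = id := (hsm.range_inj strictMono_id).mp hrange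
  ext a
  have h2 := congrFun hid (σ a)
  simp only [Equiv.symm_apply_apply, id_eq] at h2
  rw [h2]

lemma exists_chamber {x : Fin k → ℝ} (hcube : x ∈ cube k) (hinj : Function.Injective x) :
    ∃ σ : Equiv.Perm (Fin k), x ∈ chamber σ := by
  have hcard : (Finset.univ.image x).card = k := by
    rw [Finset.card_image_of_injective _ hinj, Finset.card_univ, Fintype.card_fin]
  let e := Finset.orderIsoOfFin _ hcard
  let f : Fin k → Fin k := fun a => e.symm ⟨x a, Finset.mem_image_of_mem x (Finset.mem_univ a)⟩
  have hfinj : Function.Injective f := by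
    intro a b hab
    exact hinj (Subtype.ext_iff.mp (e.symm.injective hab))
  refine ⟨Equiv.ofBijective f (Finite.injective_iff_bijective.mp hfinj), hcube, ?_⟩
  intro a b hab
  have : f a < f b := hab
  rwa [e.symm.lt_iff_lt, Subtype.mk_lt_mk] at this

lemma volume_coord_eq {k' : ℕ} (a b : Fin (k' + 1)) (hab : a ≠ b) :
    volume {x : Fin (k' + 1) → ℝ | x a = x b} = 0 := by
  obtain ⟨j, hj⟩ := Fin.exists_succAbove_eq (Ne.symm hab)
  set e := MeasurableEquiv.piFinSuccAbove (fun _ : Fin (k' + 1) => ℝ) a with he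
  set S : Set (ℝ × (Fin k' → ℝ)) := {p | p.1 = p.2 j} with hS
  have hSm : MeasurableSet S := measurableSet_eq_fun measurable_fst
    ((measurable_pi_apply j).comp measurable_snd)
  have hpre : {x : Fin (k' + 1) → ℝ | x a = x b} = e ⁻¹' S := by
    ext x
    have h1 : (e x).1 = x a := rfl
    have h2 : (e x).2 j = x (a.succAbove j) := rfl
    simp only [Set.mem_preimage, Set.mem_setOf_eq, hS, h1, h2, hj]
  rw [hpre, (volume_preserving_piFinSuccAbove (fun _ : Fin (k' + 1) => ℝ) a).measure_preimage
    hSm.nullMeasurableSet]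
  rw [Measure.volume_eq_prod, Measure.prod_apply_symm hSm]
  have : ∀ y : Fin k' → ℝ, ((fun t : ℝ => (t, y)) ⁻¹' S) = {y j} := by
    intro y; ext t; simp [hS]
  simp only [this]
  simp

lemma volume_not_injective (k : ℕ) :
    volume {x : Fin k → ℝ | ¬ Function.Injective x} = 0 := by
  cases k with
  | zero =>
    have : {x : Fin 0 → ℝ | ¬ Function.Injective x} = ∅ := by
      ext x; simp [Function.Injective]
    simp [this]
  | succ k' =>
    apply measure_mono_null (t := ⋃ a : Fin (k'+1), ⋃ b : Fin (k'+1),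
      {x : Fin (k'+1) → ℝ | x a = x b ∧ a ≠ b})
    · intro x hx
      simp only [Set.mem_setOf_eq, Function.Injective, not_forall] at hx
      obtain ⟨a, b, hxy, hne⟩ := hx
      exact Set.mem_iUnion.mpr ⟨a, Set.mem_iUnion.mpr ⟨b, hxy, hne⟩⟩
    · apply measure_iUnion_null; intro a
      apply measure_iUnion_null; intro b
      by_cases hab : a = b
      · have : {x : Fin (k'+1) → ℝ | x a = x b ∧ a ≠ b} = ∅ := by ext x; simp [hab]
        simp [this]
      · exact measure_mono_null (fun x hx => hx.1) (volume_coord_eq a b hab)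

noncomputable def linextFinset (R : Fin k → Fin k → Prop) : Finset (Equiv.Perm (Fin k)) :=
  Finset.univ.filter (fun σ => ∀ a b, R a b → σ a < σ b)

lemma volume_biUnion_chambers (R : Fin k → Fin k → Prop) :
    volume (⋃ σ ∈ linextFinset R, chamber σ)
      = (linextFinset R).card * volume (chamber (1 : Equiv.Perm (Fin k))) := by
  rw [measure_biUnion_finset (fun σ _ τ _ hne => chamber_disjoint hne)
    (fun σ _ => measurableSet_chamber σ)]
  rw [Finset.sum_congr rfl (fun σ _ => volume_chamber_eq σ), Finset.sum_const, nsmul_eq_mul]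

lemma volume_cubeOrd_eq_card (R : Fin k → Fin k → Prop) (hR : ∀ a b, R a b → a ≠ b) :
    volume (cubeOrd R)
      = (linextFinset R).card * volume (chamber (1 : Equiv.Perm (Fin k))) := by
  rw [← volume_biUnion_chambers R]
  apply le_antisymm
  · have hcover : cubeOrd R ⊆ (⋃ σ ∈ linextFinset R, chamber σ)
        ∪ {x : Fin k → ℝ | ¬ Function.Injective x} := by
      intro x hx
      by_cases hinj : Function.Injective x
      · left
        obtain ⟨σ, hσ⟩ := exists_chamber hx.1 hinj
        have hmem : σ ∈ linextFinset R := by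
          simp only [linextFinset, Finset.mem_filter, Finset.mem_univ, true_and]
          intro a b hab
          exact (chamber_lt_iff hσ a b).mpr
            (lt_of_le_of_ne (hx.2 a b hab) (fun h => hR a b hab (hinj h)))
        exact Set.mem_biUnion hmem hσ
      · right; exact hinj
    calc volume (cubeOrd R)
        ≤ volume ((⋃ σ ∈ linextFinset R, chamber σ)
            ∪ {x : Fin k → ℝ | ¬ Function.Injective x}) := measure_mono hcover
      _ ≤ volume (⋃ σ ∈ linextFinset R, chamber σ)
            + volume {x : Fin k → ℝ | ¬ Function.Injective x} := measure_union_le _ _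
      _ = volume (⋃ σ ∈ linextFinset R, chamber σ) := by
            rw [volume_not_injective, add_zero]
  · apply measure_mono
    apply Set.iUnion₂_subset
    intro σ hσ x hx
    simp only [linextFinset, Finset.mem_filter, Finset.mem_univ, true_and] at hσ
    exact ⟨hx.1, fun a b hab => (hx.2 a b (hσ a b hab)).le⟩

lemma volume_cube : volume (cube k) = 1 := by
  have : cube k = Set.pi Set.univ (fun _ : Fin k => Set.Icc (0:ℝ) 1) := by
    ext x; simp only [cube, Set.mem_setOf_eq, Set.mem_univ_pi]
  rw [this, volume_pi_pi]
  simp [Real.volume_Icc]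

lemma volume_chamber_one :
    volume (chamber (1 : Equiv.Perm (Fin k))) = ((Nat.factorial k : ℝ≥0∞))⁻¹ := by
  have h0 := volume_cubeOrd_eq_card (fun _ _ : Fin k => False) (by simp)
  have hcube : cubeOrd (fun _ _ : Fin k => False) = cube k := by
    ext x; simp [cubeOrd]
  have hL : linextFinset (fun _ _ : Fin k => False) = Finset.univ := by
    simp [linextFinset]
  rw [hcube, hL, volume_cube, Finset.card_univ, Fintype.card_perm, Fintype.card_fin] at h0
  have hk0 : ((Nat.factorial k : ℝ≥0∞)) ≠ 0 := by
    simp [Nat.factorial_ne_zero]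
  have hktop : ((Nat.factorial k : ℝ≥0∞)) ≠ ⊤ := by simp
  rw [← one_mul (volume (chamber (1 : Equiv.Perm (Fin k)))), ← ENNReal.inv_mul_cancel hk0 hktop,
    mul_assoc, ← h0, mul_one]

lemma volume_cubeOrd (R : Fin k → Fin k → Prop) (hR : ∀ a b, R a b → a ≠ b) :
    volume (cubeOrd R)
      = (Nat.card {σ : Equiv.Perm (Fin k) // ∀ a b, R a b → σ a < σ b} : ℝ≥0∞)
        / (Nat.factorial k : ℝ≥0∞) := by
  rw [volume_cubeOrd_eq_card R hR, volume_chamber_one, div_eq_mul_inv]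
  congr 2
  rw [Nat.card_eq_fintype_card, Fintype.card_subtype]
  congr 1

noncomputable def flipF (eps : Fin k → Prop) (x : Fin k → ℝ) : Fin k → ℝ :=
  fun j => if eps j then 1 - x j else x j

lemma measurePreserving_flipF (eps : Fin k → Prop) :
    MeasurePreserving (flipF eps) volume volume := by
  have : flipF eps = fun (x : Fin k → ℝ) (j : Fin k) =>
      (fun t : ℝ => if eps j then 1 - t else t) (x j) := rfl
  rw [this]
  refine MeasureTheory.volume_preserving_pi (f := fun (j : Fin k) (t : ℝ) => if eps j then 1 - t else t) ?_
  intro j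
  by_cases h : eps j
  · simp only [h, if_true]
    exact Measure.measurePreserving_sub_left volume 1
  · simp only [h, if_false]
    exact MeasurePreserving.id volume

lemma volume_flipF_preimage (eps : Fin k → Prop) {S : Set (Fin k → ℝ)}
    (hS : MeasurableSet S) : volume (flipF eps ⁻¹' S) = volume S :=
  (measurePreserving_flipF eps).measure_preimage hS.nullMeasurableSet

def R0 (m : ℕ) (a b : Fin m) : Prop :=
  ((b : ℕ) = (a : ℕ) + 1 ∧ Odd (a : ℕ)) ∨ ((a : ℕ) = (b : ℕ) + 1 ∧ Even (b : ℕ))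

lemma R0_ne (m : ℕ) : ∀ a b : Fin m, R0 m a b → a ≠ b := by
  rintro a b (⟨h1, _⟩ | ⟨h1, _⟩) heq <;> rw [heq] at h1 <;> omega

abbrev eps0 (m : ℕ) : Fin m → Prop := fun j => (j : ℕ) % 2 = 1

lemma Pn1_eq_preimage (n : ℕ) :
    Pn1 n = flipF (eps0 (n - 3)) ⁻¹' cubeOrd (R0 (n - 3)) := by
  ext x
  simp only [Set.mem_preimage, Pn1, cubeOrd, cube, R0, eps0, Set.mem_setOf_eq, flipF,
    Set.mem_Icc]
  constructor
  · rintro ⟨hIcc, hsum⟩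
    constructor
    · intro j
      rcases hIcc j with ⟨h0, h1⟩
      by_cases hj : (j : ℕ) % 2 = 1
      · rw [if_pos hj]; constructor <;> linarith
      · rw [if_neg hj]; exact ⟨h0, h1⟩
    · rintro a b (⟨hb, ha⟩ | ⟨ha, hb⟩)
      · rw [Nat.odd_iff] at ha
        have hlt : (a : ℕ) + 1 < n - 3 := by have := b.isLt; omega
        have hy := hsum (a : ℕ) hlt
        have e1 : (⟨(a : ℕ), Nat.lt_of_succ_lt hlt⟩ : Fin (n - 3)) = a := Fin.eta a _
        have e2 : (⟨(a : ℕ) + 1, hlt⟩ : Fin (n - 3)) = b := by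
          apply Fin.ext; simp [hb]
        rw [e1, e2] at hy
        rw [if_pos ha, if_neg (by omega : ¬ (b : ℕ) % 2 = 1)]
        linarith
      · rw [Nat.even_iff] at hb
        have hlt : (b : ℕ) + 1 < n - 3 := by have := a.isLt; omega
        have hy := hsum (b : ℕ) hlt
        have e1 : (⟨(b : ℕ), Nat.lt_of_succ_lt hlt⟩ : Fin (n - 3)) = b := Fin.eta b _
        have e2 : (⟨(b : ℕ) + 1, hlt⟩ : Fin (n - 3)) = a := by
          apply Fin.ext; simp [ha]
        rw [e1, e2] at hy
        rw [if_pos (by omega : (a : ℕ) % 2 = 1), if_neg (by omega : ¬ (b : ℕ) % 2 = 1)]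
        linarith
  · rintro ⟨hIcc, hord⟩
    constructor
    · intro j
      have := hIcc j
      by_cases hj : (j : ℕ) % 2 = 1
      · rw [if_pos hj] at this; constructor <;> linarith [this.1, this.2]
      · rw [if_neg hj] at this; exact this
    · intro j hlt
      by_cases hj : j % 2 = 1
      · have h := hord ⟨j, Nat.lt_of_succ_lt hlt⟩ ⟨j + 1, hlt⟩
          (Or.inl ⟨rfl, by rw [Nat.odd_iff]; exact hj⟩)
        rw [if_pos (by simpa using hj), if_neg (by simp; omega)] at h
        linarith
      · have h := hord ⟨j + 1, hlt⟩ ⟨j, Nat.lt_of_succ_lt hlt⟩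
          (Or.inr ⟨rfl, by rw [Nat.even_iff]; simpa using hj⟩)
        rw [if_pos (by simp; omega), if_neg (by simpa using hj)] at h
        linarith

lemma linext_R0_iff {m : ℕ} (σ : Equiv.Perm (Fin m)) :
    (∀ a b : Fin m, R0 m a b → σ a < σ b) ↔ DownUp σ := by
  constructor
  · intro H i h
    by_cases he : Even i
    · rw [if_pos he]
      apply H ⟨i + 1, h⟩ ⟨i, Nat.lt_of_succ_lt h⟩
      exact Or.inr ⟨by simp, by simpa using he⟩
    · rw [if_neg he]
      apply H ⟨i, Nat.lt_of_succ_lt h⟩ ⟨i + 1, h⟩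
      exact Or.inl ⟨by simp, Nat.not_even_iff_odd.mp he⟩
  · rintro H a b (⟨hb, ha⟩ | ⟨ha, hb⟩)
    · have hlt : (a : ℕ) + 1 < m := by have := b.isLt; omega
      have h := H (a : ℕ) hlt
      rw [if_neg (Nat.not_even_iff_odd.mpr ha)] at h
      have e1 : (⟨(a : ℕ), Nat.lt_of_succ_lt hlt⟩ : Fin m) = a := Fin.eta a _
      have e2 : (⟨(a : ℕ) + 1, hlt⟩ : Fin m) = b := by apply Fin.ext; simp [hb]
      rwa [e1, e2] at h
    · have hlt : (b : ℕ) + 1 < m := by have := a.isLt; omega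
      have h := H (b : ℕ) hlt
      rw [if_pos hb] at h
      have e1 : (⟨(b : ℕ), Nat.lt_of_succ_lt hlt⟩ : Fin m) = b := Fin.eta b _
      have e2 : (⟨(b : ℕ) + 1, hlt⟩ : Fin m) = a := by apply Fin.ext; simp [ha]
      rwa [e1, e2] at h

lemma volume_Pn1 (n : ℕ) :
    volume (Pn1 n) = (eulerNumber (n - 3) : ℝ≥0∞) / (Nat.factorial (n - 3) : ℝ≥0∞) := by
  rw [Pn1_eq_preimage n, volume_flipF_preimage _ (measurableSet_cubeOrd _),
    volume_cubeOrd _ (R0_ne (n - 3))]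
  congr 2
  rw [eulerNumber]
  exact Nat.card_congr (Equiv.subtypeEquivRight (fun σ => linext_R0_iff σ))

def RZ (m i : ℕ) (a b : Fin (m + 1)) : Prop := ZRel m i (a : ℕ) (b : ℕ)

lemma RZ_ne (m i : ℕ) (hi1 : 1 ≤ i) : ∀ a b : Fin (m + 1), RZ m i a b → a ≠ b := by
  intro a b hr heq
  subst heq
  rcases hr with ⟨h1, h2⟩ | ⟨h1, -⟩ | ⟨h1, -⟩ | ⟨h1, -⟩ | ⟨h1, -⟩ <;> omega

abbrev epsZ (i : ℕ) {m : ℕ} (kk : Fin (m + 1)) : Prop :=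
  1 ≤ (kk : ℕ) ∧ ¬ ((kk : ℕ) % 2 = i % 2)

def QZ (m i : ℕ) : Set (Fin (m + 1) → ℝ) :=
  {x | (∀ j, x j ∈ Set.Icc (0 : ℝ) 1) ∧
    (∀ j : ℕ, ∀ h : j + 2 < m + 1, 1 ≤ x ⟨j + 1, Nat.lt_of_succ_lt h⟩ + x ⟨j + 2, h⟩) ∧
    ∀ h : i < m + 1, x 0 ≤ x ⟨i, h⟩}

lemma QZ_eq_preimage (m i : ℕ) (hi1 : 1 ≤ i) (him : i ≤ m) :
    QZ m i = flipF (epsZ i) ⁻¹' cubeOrd (RZ m i) := by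
  ext x
  simp only [Set.mem_preimage, QZ, cubeOrd, cube, RZ, ZRel, Set.mem_setOf_eq, flipF, Set.mem_Icc]
  constructor
  · rintro ⟨hIcc, hsum, h0i⟩
    constructor
    · intro j
      rcases hIcc j with ⟨h0, h1⟩
      by_cases hj : epsZ i j
      · rw [if_pos hj]; constructor <;> linarith
      · rw [if_neg hj]; exact ⟨h0, h1⟩
    · rintro a b (⟨ha0, hbi⟩ | ⟨hb, ha1, hai, hodd⟩ | ⟨hb, hia, ham, hodd⟩ |
        ⟨ha, hb1, hbi, heven⟩ | ⟨ha, hib, hbm, heven⟩)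
      · rw [if_neg (show ¬ epsZ i a by simp only [epsZ]; omega),
          if_neg (show ¬ epsZ i b by simp only [epsZ]; omega)]
        have h := h0i (show i < m + 1 by omega)
        have e1 : a = (0 : Fin (m + 1)) := Fin.ext (by simpa using ha0)
        have e2 : b = (⟨i, show i < m + 1 by omega⟩ : Fin (m + 1)) := Fin.ext (by simpa using hbi)
        rw [e1, e2]
        exact h
      · rw [Nat.odd_iff] at hodd
        rw [if_pos (show epsZ i a from ⟨ha1, by omega⟩),
          if_neg (show ¬ epsZ i b by simp only [epsZ]; omega)]
        have hlt : ((a : ℕ) - 1) + 2 < m + 1 := by have := b.isLt; omega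
        have h := hsum ((a : ℕ) - 1) hlt
        have e1 : (⟨(a : ℕ) - 1 + 1, Nat.lt_of_succ_lt hlt⟩ : Fin (m + 1)) = a :=
          Fin.ext (by simp; omega)
        have e2 : (⟨(a : ℕ) - 1 + 2, hlt⟩ : Fin (m + 1)) = b := Fin.ext (by simp; omega)
        rw [e1, e2] at h
        linarith
      · rw [Nat.odd_iff] at hodd
        rw [if_pos (show epsZ i a from ⟨by omega, by omega⟩),
          if_neg (show ¬ epsZ i b by simp only [epsZ]; omega)]
        have hlt : ((a : ℕ) - 1) + 2 < m + 1 := by omega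
        have h := hsum ((a : ℕ) - 1) hlt
        have e1 : (⟨(a : ℕ) - 1 + 1, Nat.lt_of_succ_lt hlt⟩ : Fin (m + 1)) = a :=
          Fin.ext (by simp; omega)
        have e2 : (⟨(a : ℕ) - 1 + 2, hlt⟩ : Fin (m + 1)) = b := Fin.ext (by simp; omega)
        rw [e1, e2] at h
        linarith
      · rw [Nat.even_iff] at heven
        rw [if_pos (show epsZ i a from ⟨by omega, by omega⟩),
          if_neg (show ¬ epsZ i b by simp only [epsZ]; omega)]
        have hlt : ((b : ℕ) - 1) + 2 < m + 1 := by have := a.isLt; omega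
        have h := hsum ((b : ℕ) - 1) hlt
        have e1 : (⟨(b : ℕ) - 1 + 1, Nat.lt_of_succ_lt hlt⟩ : Fin (m + 1)) = b :=
          Fin.ext (by simp; omega)
        have e2 : (⟨(b : ℕ) - 1 + 2, hlt⟩ : Fin (m + 1)) = a := Fin.ext (by simp; omega)
        rw [e1, e2] at h
        linarith
      · rw [Nat.even_iff] at heven
        rw [if_pos (show epsZ i a from ⟨by omega, by omega⟩),
          if_neg (show ¬ epsZ i b by simp only [epsZ]; omega)]
        have hlt : ((b : ℕ) - 1) + 2 < m + 1 := by have := a.isLt; omega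
        have h := hsum ((b : ℕ) - 1) hlt
        have e1 : (⟨(b : ℕ) - 1 + 1, Nat.lt_of_succ_lt hlt⟩ : Fin (m + 1)) = b :=
          Fin.ext (by simp; omega)
        have e2 : (⟨(b : ℕ) - 1 + 2, hlt⟩ : Fin (m + 1)) = a := Fin.ext (by simp; omega)
        rw [e1, e2] at h
        linarith
  · rintro ⟨hIcc, hord⟩
    refine ⟨fun j => ?_, fun j hlt => ?_, fun hi => ?_⟩
    · have := hIcc j
      by_cases hj : epsZ i j
      · rw [if_pos hj] at this; constructor <;> linarith [this.1, this.2]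
      · rw [if_neg hj] at this; exact this
    · by_cases hcase : j + 1 < i
      · by_cases hpar : (i - (j + 1)) % 2 = 1
        · have h := hord ⟨j + 1, Nat.lt_of_succ_lt hlt⟩ ⟨j + 2, hlt⟩
            (Or.inr (Or.inl ⟨by simp, by simp, by simpa using hcase,
              by rw [Nat.odd_iff]; simpa using hpar⟩))
          rw [if_pos (show epsZ i (⟨j + 1, Nat.lt_of_succ_lt hlt⟩ : Fin (m + 1)) from
              ⟨by simp, by simp; omega⟩),
            if_neg (show ¬ epsZ i (⟨j + 2, hlt⟩ : Fin (m + 1)) by simp only [epsZ]; simp; omega)] at h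
          linarith
        · have h := hord ⟨j + 2, hlt⟩ ⟨j + 1, Nat.lt_of_succ_lt hlt⟩
            (Or.inr (Or.inr (Or.inr (Or.inl ⟨by simp, by simp, by simpa using hcase,
              by rw [Nat.even_iff]; simpa using hpar⟩))))
          rw [if_pos (show epsZ i (⟨j + 2, hlt⟩ : Fin (m + 1)) from
              ⟨by simp, by simp; omega⟩),
            if_neg (show ¬ epsZ i (⟨j + 1, Nat.lt_of_succ_lt hlt⟩ : Fin (m + 1)) by
              simp only [epsZ]; simp; omega)] at h
          linarith
      · by_cases hpar : ((j + 1) - i) % 2 = 1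
        · have h := hord ⟨j + 1, Nat.lt_of_succ_lt hlt⟩ ⟨j + 2, hlt⟩
            (Or.inr (Or.inr (Or.inl ⟨by simp, by simp; omega, by simp; omega,
              by rw [Nat.odd_iff]; simpa using hpar⟩)))
          rw [if_pos (show epsZ i (⟨j + 1, Nat.lt_of_succ_lt hlt⟩ : Fin (m + 1)) from
              ⟨by simp, by simp; omega⟩),
            if_neg (show ¬ epsZ i (⟨j + 2, hlt⟩ : Fin (m + 1)) by simp only [epsZ]; simp; omega)] at h
          linarith
        · have h := hord ⟨j + 2, hlt⟩ ⟨j + 1, Nat.lt_of_succ_lt hlt⟩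
            (Or.inr (Or.inr (Or.inr (Or.inr ⟨by simp, by simp; omega, by simp; omega,
              by rw [Nat.even_iff]; simpa using hpar⟩))))
          rw [if_pos (show epsZ i (⟨j + 2, hlt⟩ : Fin (m + 1)) from
              ⟨by simp, by simp; omega⟩),
            if_neg (show ¬ epsZ i (⟨j + 1, Nat.lt_of_succ_lt hlt⟩ : Fin (m + 1)) by
              simp only [epsZ]; simp; omega)] at h
          linarith
    · have h := hord 0 ⟨i, hi⟩ (Or.inl ⟨by simp, by simp⟩)
      rw [if_neg (show ¬ epsZ i (0 : Fin (m + 1)) by simp only [epsZ]; simp),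
        if_neg (show ¬ epsZ i (⟨i, hi⟩ : Fin (m + 1)) by simp only [epsZ]; simp)] at h
      exact h

lemma measurableSet_forall_imp {α : Type*} [MeasurableSpace α] (p : Prop) (s : p → Set α)
    (hs : ∀ h, MeasurableSet (s h)) : MeasurableSet {x | ∀ h : p, x ∈ s h} := by
  by_cases hp : p
  · have : {x | ∀ h : p, x ∈ s h} = s hp := by ext x; simp [hp]
    rw [this]; exact hs hp
  · have : {x | ∀ h : p, x ∈ s h} = Set.univ := by ext x; simp [hp]
    rw [this]; exact MeasurableSet.univ

lemma measurableSet_Pn1 (n : ℕ) : MeasurableSet (Pn1 n) := by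
  have : Pn1 n = cube (n - 3) ∩ ⋂ j : ℕ, {d : Fin (n - 3) → ℝ | ∀ h : j + 1 < n - 3,
      d ∈ {d : Fin (n - 3) → ℝ | 1 ≤ d ⟨j, Nat.lt_of_succ_lt h⟩ + d ⟨j + 1, h⟩}} := by
    ext d; simp [Pn1, cube]
  rw [this]
  refine measurableSet_cube.inter (MeasurableSet.iInter fun j => ?_)
  exact measurableSet_forall_imp _ _ (fun h => measurableSet_le measurable_const
    ((measurable_pi_apply (⟨j, Nat.lt_of_succ_lt h⟩ : Fin (n - 3))).add
      (measurable_pi_apply (⟨j + 1, h⟩ : Fin (n - 3)))))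

lemma volume_QZ (m i : ℕ) (hi1 : 1 ≤ i) (him : i ≤ m) :
    volume (QZ m i) = (eZ m i : ℝ≥0∞) / (Nat.factorial (m + 1) : ℝ≥0∞) := by
  rw [QZ_eq_preimage m i hi1 him, volume_flipF_preimage _ (measurableSet_cubeOrd _),
    volume_cubeOrd _ (RZ_ne m i hi1)]
  congr 2

lemma volume_QZ_lintegral (n i : ℕ) (hn : 4 ≤ n) (hi1 : 1 ≤ i) (hi2 : i ≤ n - 3) :
    volume (QZ (n - 3) i)
      = ∫⁻ d in Pn1 n, ENNReal.ofReal (d ⟨i - 1, lt_of_lt_of_le (Nat.sub_lt hi1 Nat.one_pos) hi2⟩) := by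
  set j0 : Fin (n - 3) := ⟨i - 1, by omega⟩ with hj0
  set e := MeasurableEquiv.piFinSuccAbove (fun _ : Fin ((n - 3) + 1) => ℝ) 0 with he
  set S : Set (ℝ × (Fin (n - 3) → ℝ)) :=
    {p | p.2 ∈ Pn1 n ∧ p.1 ∈ Set.Icc 0 (p.2 j0)} with hSdef
  have hSm : MeasurableSet S := by
    have : S = (Prod.snd ⁻¹' Pn1 n) ∩
        ({p : ℝ × (Fin (n - 3) → ℝ) | 0 ≤ p.1} ∩ {p : ℝ × (Fin (n - 3) → ℝ) | p.1 ≤ p.2 j0}) := by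
      ext p; simp [hSdef, Set.mem_Icc, and_assoc]
    rw [this]
    exact ((measurableSet_Pn1 n).preimage measurable_snd).inter
      ((measurableSet_le measurable_const measurable_fst).inter
        (measurableSet_le measurable_fst ((measurable_pi_apply j0).comp measurable_snd)))
  have hfst : ∀ x : Fin ((n - 3) + 1) → ℝ, (e x).1 = x 0 := fun _ => rfl
  have hsnd : ∀ (x : Fin ((n - 3) + 1) → ℝ) (j : Fin (n - 3)), (e x).2 j = x j.succ := by
    intro x j
    show x ((0 : Fin ((n - 3) + 1)).succAbove j) = x j.succ
    rw [Fin.succAbove_zero]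
  have hQS : QZ (n - 3) i = e ⁻¹' S := by
    ext x
    simp only [Set.mem_preimage, hSdef, Set.mem_setOf_eq, Pn1, Set.mem_Icc, QZ]
    constructor
    · rintro ⟨hIcc, hsum, h0i⟩
      refine ⟨⟨fun j => hIcc _, fun j h => ?_⟩, ?_, ?_⟩
      · rw [hsnd, hsnd, Fin.succ_mk, Fin.succ_mk]
        exact hsum j (by omega)
      · rw [hfst]; exact (hIcc 0).1
      · rw [hfst, hsnd, hj0, Fin.succ_mk]
        have := h0i (by omega)
        convert this using 3
        · rfl
        omega
    · rintro ⟨⟨hIcc, hsum⟩, h0, h0i⟩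
      refine ⟨fun k => ?_, fun j h => ?_, fun h => ?_⟩
      · rcases Fin.eq_zero_or_eq_succ k with hk | ⟨j, hk⟩
        · subst hk
          exact ⟨h0, le_trans h0i (hIcc j0).2⟩
        · subst hk
          have := hIcc j
          rw [hsnd] at this
          exact this
      · have h2 := hsum j (by omega)
        rw [hsnd, hsnd, Fin.succ_mk, Fin.succ_mk] at h2
        convert h2 using 3
      · rw [hfst, hsnd, hj0, Fin.succ_mk] at h0i
        convert h0i using 3
        · rfl
        omega
  rw [hQS, (volume_preserving_piFinSuccAbove (fun _ : Fin ((n - 3) + 1) => ℝ) 0).measure_preimage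
    hSm.nullMeasurableSet, Measure.volume_eq_prod, Measure.prod_apply_symm hSm]
  have hslice : ∀ d : Fin (n - 3) → ℝ,
      ((fun t : ℝ => (t, d)) ⁻¹' S) = if d ∈ Pn1 n then Set.Icc 0 (d j0) else ∅ := by
    intro d; ext t
    by_cases hd : d ∈ Pn1 n <;> simp [hSdef, hd]
  have : ∀ d : Fin (n - 3) → ℝ, volume ((fun t : ℝ => (t, d)) ⁻¹' S)
      = Set.indicator (Pn1 n) (fun d => ENNReal.ofReal (d j0)) d := by
    intro d
    rw [hslice]
    by_cases hd : d ∈ Pn1 n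
    · rw [if_pos hd, Set.indicator_of_mem hd, Real.volume_Icc, sub_zero]
    · rw [if_neg hd, Set.indicator_of_notMem hd, measure_empty]
  rw [lintegral_congr this, lintegral_indicator (measurableSet_Pn1 n)]

lemma eulerNumber_pos (m : ℕ) : 0 < eulerNumber m := by
  rw [eulerNumber]
  have : Nonempty {τ : Equiv.Perm (Fin m) // DownUp τ} := by
    let f : Fin m → Fin m := fun v =>
      if (v : ℕ) % 2 = 0 then ⟨m - 1 - (v : ℕ) / 2, by have := v.isLt; omega⟩
      else ⟨(v : ℕ) / 2, by have := v.isLt; omega⟩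
    have hfinj : Function.Injective f := by
      intro u v h
      have hval := congrArg Fin.val h
      have hu2 := u.isLt
      have hv2 := v.isLt
      apply Fin.ext
      by_cases hu : (u : ℕ) % 2 = 0 <;> by_cases hv : (v : ℕ) % 2 = 0 <;>
        simp only [f, hu, hv, if_true, if_false, if_pos, if_neg, Fin.val_mk] at hval <;>
        omega
    refine ⟨Equiv.ofBijective f (Finite.injective_iff_bijective.mp hfinj), ?_⟩
    intro j h
    have hj1 : j < m := Nat.lt_of_succ_lt h
    by_cases hje : Even j
    · rw [if_pos hje]
      show f ⟨j + 1, h⟩ < f ⟨j, hj1⟩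
      rw [Nat.even_iff] at hje
      rw [Fin.lt_def]
      simp only [f, Fin.val_mk]
      rw [if_neg (show ¬ (j + 1) % 2 = 0 by omega), if_pos (show j % 2 = 0 by omega)]
      simp only [Fin.val_mk]
      omega
    · rw [if_neg hje]
      show f ⟨j, hj1⟩ < f ⟨j + 1, h⟩
      rw [Nat.not_even_iff] at hje
      rw [Fin.lt_def]
      simp only [f, Fin.val_mk]
      rw [if_neg (show ¬ j % 2 = 0 by omega), if_pos (show (j + 1) % 2 = 0 by omega)]
      simp only [Fin.val_mk]
      omega
  exact Nat.card_pos

end Stmt18Aux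

/-- for `n ≥ 4` and `1 ≤ i ≤ n-3`, the expected value of the `i`-th coordinate
under the uniform measure on `P_n(1)` is `e(Z_{n-3,i})/((n-2)·E_{n-3})`; equivalently, the
unnormalized integral is `e(Z_{n-3,i})/(n-2)!`. -/
theorem expected_coordinate_Pn1 (n i : ℕ) (hn : 4 ≤ n) (hi1 : 1 ≤ i) (hi2 : i ≤ n - 3) :
    (∫ x in Pn1 n, x ⟨i - 1, by omega⟩) / (volume (Pn1 n)).toReal =
        (eZ (n - 3) i : ℝ) / ((n - 2) * eulerNumber (n - 3)) ∧
    (∫ x in Pn1 n, x ⟨i - 1, by omega⟩) =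
        (eZ (n - 3) i : ℝ) / (Nat.factorial (n - 2)) := by
  have hE := Stmt18Aux.eulerNumber_pos (n - 3)
  have hP := Stmt18Aux.volume_Pn1 n
  have hQ := Stmt18Aux.volume_QZ (n - 3) i hi1 hi2
  have hQL := Stmt18Aux.volume_QZ_lintegral n i hn hi1 hi2
  have hL2 : (∫⁻ x in Pn1 n, ENNReal.ofReal (x ⟨i - 1, by omega⟩))
      = (eZ (n - 3) i : ℝ≥0∞) / (Nat.factorial ((n - 3) + 1) : ℝ≥0∞) := hQL.symm.trans hQ
  have hfac : (n - 3) + 1 = n - 2 := by omega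
  rw [hfac] at hL2
  have hInt : (∫ x in Pn1 n, x ⟨i - 1, by omega⟩)
      = (eZ (n - 3) i : ℝ) / (Nat.factorial (n - 2) : ℝ) := by
    rw [MeasureTheory.integral_eq_lintegral_of_nonneg_ae
      ((ae_restrict_iff' (Stmt18Aux.measurableSet_Pn1 n)).mpr
        (Filter.Eventually.of_forall (fun x hx => (hx.1 ⟨i - 1, by omega⟩).1)))
      (measurable_pi_apply _).aestronglyMeasurable]
    rw [hL2, ENNReal.toReal_div]
    norm_num
  refine ⟨?_, hInt⟩
  rw [hInt, hP, ENNReal.toReal_div]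
  have hcast1 : ((eulerNumber (n - 3) : ℝ≥0∞)).toReal = (eulerNumber (n - 3) : ℝ) := rfl
  have hcast2 : ((Nat.factorial (n - 3) : ℝ≥0∞)).toReal = (Nat.factorial (n - 3) : ℝ) := rfl
  rw [hcast1, hcast2]
  have hfacR : (Nat.factorial (n - 2) : ℝ)
      = ((n - 2 : ℕ) : ℝ) * (Nat.factorial (n - 3) : ℝ) := by
    rw [show n - 2 = (n - 3) + 1 by omega, Nat.factorial_succ]
    push_cast
    ring
  have hEu : (0 : ℝ) < (eulerNumber (n - 3) : ℝ) := by exact_mod_cast hE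
  have hF3 : (0 : ℝ) < (Nat.factorial (n - 3) : ℝ) := by
    exact_mod_cast Nat.factorial_pos (n - 3)
  have hn2 : ((n - 2 : ℕ) : ℝ) = (n : ℝ) - 2 := by
    push_cast [Nat.cast_sub (show 2 ≤ n by omega)]
    ring
  have hn2pos : (0 : ℝ) < ((n - 2 : ℕ) : ℝ) := by
    have : 0 < n - 2 := by omega
    exact_mod_cast this
  rw [hfacR, ← hn2]
  field_simp
end

section
/- Let p, q, r ∈ ℝ³ satisfy ‖q − p‖ = 1 and ‖r − q‖ = 1, and set a = ‖p‖, b = ‖q‖, c = ‖r‖. Assume the cross products p × q and q × r are both nonzero (in particular b ≠ 0). Define cos θ = ((p × q)·(q × r))/(‖p × q‖·‖q × r‖) and A = √((a+b−1)(a−b+1)(−a+b+1)(a+b+1)) · √((b+c−1)(b−c+1)(−b+c+1)(b+c+1)). Then (q − p)·(r − q) = (a² + c²)/2 − 1 − [(a² + b² − 1)(b² + c² − 1) − A·cos θ]/(4b²). -/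
open scoped Classical

/-- The standard inner product on `ℝ³`. -/
def dot3 (v w : Fin 3 → ℝ) : ℝ := ∑ j, v j * w j

/-- The Euclidean norm on `ℝ³`. -/
noncomputable def norm3 (v : Fin 3 → ℝ) : ℝ := Real.sqrt (dot3 v v)

/-- The cross product on `ℝ³`. -/
def cross3 (v w : Fin 3 → ℝ) : Fin 3 → ℝ :=
  ![v 1 * w 2 - v 2 * w 1, v 2 * w 0 - v 0 * w 2, v 0 * w 1 - v 1 * w 0]

lemma dot3_self_nonneg (v : Fin 3 → ℝ) : 0 ≤ dot3 v v := by
  simp only [dot3, Fin.sum_univ_three]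
  nlinarith [sq_nonneg (v 0), sq_nonneg (v 1), sq_nonneg (v 2)]

lemma norm3_sq (v : Fin 3 → ℝ) : norm3 v ^ 2 = dot3 v v := by
  rw [norm3, Real.sq_sqrt (dot3_self_nonneg v)]

lemma dot3_self_eq_zero {v : Fin 3 → ℝ} (h : dot3 v v = 0) : v = 0 := by
  simp only [dot3, Fin.sum_univ_three] at h
  funext j
  fin_cases j
  · show v 0 = 0
    nlinarith [mul_self_nonneg (v 0), mul_self_nonneg (v 1), mul_self_nonneg (v 2)]
  · show v 1 = 0
    nlinarith [mul_self_nonneg (v 0), mul_self_nonneg (v 1), mul_self_nonneg (v 2)]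
  · show v 2 = 0
    nlinarith [mul_self_nonneg (v 0), mul_self_nonneg (v 1), mul_self_nonneg (v 2)]

lemma norm3_pos {v : Fin 3 → ℝ} (h : v ≠ 0) : 0 < norm3 v := by
  rw [norm3]
  apply Real.sqrt_pos.2
  rcases lt_or_eq_of_le (dot3_self_nonneg v) with h' | h'
  · exact h'
  · exact absurd (dot3_self_eq_zero h'.symm) h

/-- with `‖q - p‖ = ‖r - q‖ = 1`, `a = ‖p‖`, `b = ‖q‖`, `c = ‖r‖`,
`cos θ = ((p×q)·(q×r))/(‖p×q‖·‖q×r‖)` and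
`A = √((a+b-1)(a-b+1)(-a+b+1)(a+b+1))·√((b+c-1)(b-c+1)(-b+c+1)(b+c+1))`, we have
`(q-p)·(r-q) = (a²+c²)/2 - 1 - ((a²+b²-1)(b²+c²-1) - A·cos θ)/(4b²)`. -/
theorem turning_angle_formula (p q r : Fin 3 → ℝ)
    (hpq : norm3 (q - p) = 1) (hqr : norm3 (r - q) = 1)
    (a b c : ℝ) (ha : a = norm3 p) (hb : b = norm3 q) (hc : c = norm3 r)
    (hcross1 : cross3 p q ≠ 0) (hcross2 : cross3 q r ≠ 0)
    (cosθ : ℝ)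
    (hθ : cosθ = dot3 (cross3 p q) (cross3 q r) / (norm3 (cross3 p q) * norm3 (cross3 q r)))
    (A : ℝ)
    (hA : A = Real.sqrt ((a + b - 1) * (a - b + 1) * (-a + b + 1) * (a + b + 1)) *
        Real.sqrt ((b + c - 1) * (b - c + 1) * (-b + c + 1) * (b + c + 1))) :
    dot3 (q - p) (r - q) =
      (a ^ 2 + c ^ 2) / 2 - 1 -
        ((a ^ 2 + b ^ 2 - 1) * (b ^ 2 + c ^ 2 - 1) - A * cosθ) / (4 * b ^ 2) := by
  set P := dot3 p p with hP
  set Q := dot3 q q with hQ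
  set R := dot3 r r with hR
  set X := dot3 p q with hX
  set Y := dot3 q r with hY
  set Z := dot3 p r with hZ
  have ha2 : a ^ 2 = P := by rw [ha, norm3_sq]
  have hb2 : b ^ 2 = Q := by rw [hb, norm3_sq]
  have hc2 : c ^ 2 = R := by rw [hc, norm3_sq]
  -- cross product identities
  have hD : dot3 (cross3 p q) (cross3 q r) = X * Y - Z * Q := by
    simp only [hX, hY, hZ, hQ, dot3, cross3, Fin.sum_univ_three]
    simp [Matrix.cons_val_zero, Matrix.cons_val_one]
    ring
  have hN1 : dot3 (cross3 p q) (cross3 p q) = P * Q - X ^ 2 := by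
    simp only [hP, hQ, hX, dot3, cross3, Fin.sum_univ_three]
    simp [Matrix.cons_val_zero, Matrix.cons_val_one]
    ring
  have hN2 : dot3 (cross3 q r) (cross3 q r) = Q * R - Y ^ 2 := by
    simp only [hQ, hR, hY, dot3, cross3, Fin.sum_univ_three]
    simp [Matrix.cons_val_zero, Matrix.cons_val_one]
    ring
  -- unit edge conditions
  have hpq2 : Q - 2 * X + P = 1 := by
    have h1 : dot3 (q - p) (q - p) = 1 := by
      rw [← norm3_sq, hpq]; norm_num
    rw [show dot3 (q - p) (q - p) = Q - 2 * X + P by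
      simp only [hP, hQ, hX, dot3, Fin.sum_univ_three, Pi.sub_apply]; ring] at h1
    exact h1
  have hqr2 : R - 2 * Y + Q = 1 := by
    have h1 : dot3 (r - q) (r - q) = 1 := by
      rw [← norm3_sq, hqr]; norm_num
    rw [show dot3 (r - q) (r - q) = R - 2 * Y + Q by
      simp only [hQ, hR, hY, dot3, Fin.sum_univ_three, Pi.sub_apply]; ring] at h1
    exact h1
  -- norms of cross products
  have hn1pos : 0 < norm3 (cross3 p q) := norm3_pos hcross1
  have hn2pos : 0 < norm3 (cross3 q r) := norm3_pos hcross2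
  -- b ≠ 0
  have hQpos : Q ≠ 0 := by
    intro h
    exact hcross1 (by
      have hq0 : q = 0 := dot3_self_eq_zero h
      subst hq0
      funext j
      fin_cases j <;> simp [cross3])
  -- compute A
  have hann : 0 ≤ a := ha ▸ Real.sqrt_nonneg _
  have hbnn : 0 ≤ b := hb ▸ Real.sqrt_nonneg _
  have hcnn : 0 ≤ c := hc ▸ Real.sqrt_nonneg _
  have hA1 : (a + b - 1) * (a - b + 1) * (-a + b + 1) * (a + b + 1)
      = 4 * dot3 (cross3 p q) (cross3 p q) := by
    rw [hN1]
    have : X = (P + Q - 1) / 2 := by linarith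
    rw [this, ← ha2, ← hb2]; ring
  have hA2 : (b + c - 1) * (b - c + 1) * (-b + c + 1) * (b + c + 1)
      = 4 * dot3 (cross3 q r) (cross3 q r) := by
    rw [hN2]
    have : Y = (Q + R - 1) / 2 := by linarith
    rw [this, ← hb2, ← hc2]; ring
  have hsqrt4 : ∀ x : ℝ, Real.sqrt (4 * x) = 2 * Real.sqrt x := by
    intro x
    rw [Real.sqrt_mul (by norm_num : (0:ℝ) ≤ 4), show (4:ℝ) = 2 ^ 2 by norm_num,
      Real.sqrt_sq (by norm_num : (0:ℝ) ≤ 2)]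
  have hAval : A = 4 * (norm3 (cross3 p q) * norm3 (cross3 q r)) := by
    rw [hA, hA1, hA2, hsqrt4, hsqrt4, norm3, norm3]; ring
  have hAcos : A * cosθ = 4 * (X * Y - Z * Q) := by
    rw [hAval, hθ, hD]
    field_simp
  -- final computation
  have hgoal : dot3 (q - p) (r - q) = Y - Q - Z + X := by
    simp only [hQ, hX, hY, hZ, dot3, Fin.sum_univ_three, Pi.sub_apply]; ring
  rw [hgoal, ha2, hb2, hc2, hAcos]
  have hXval : X = (P + Q - 1) / 2 := by linarith
  have hYval : Y = (Q + R - 1) / 2 := by linarith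
  rw [hXval, hYval]
  field_simp
  ring
end
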